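/- arXiv:2403.18574 — 6 statements merged into one kernel-verified Lean document; each statement's English description precedes it below -/
import Mathlib

section
/- The 2-measure of a finitely supported sequence f equals the maximum size of a subset of the support S(f) that contains no two consecutive integers, and this maximum equals the common cardinality of L(f) and R(f). -/
open scoped Classical

noncomputable section

/-- `f` is a frequency sequence: `f 0 = 0` and finite support. -/
def IsFreq (f : ℕ → ℕ) : Prop := f 0 = 0 ∧ (Function.support f).Finite

/-- size `|f| = ∑ i·f i`. -/
def fsize (f : ℕ → ℕ) : ℕ := ∑ᶠ n, n * f n

/-- length `ℓ(f) = ∑ f i`. -/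
def flen (f : ℕ → ℕ) : ℕ := ∑ᶠ n, f n

/-- the support `S(f)`. -/
def suppF (f : ℕ → ℕ) : Set ℕ := {i | 1 ≤ i ∧ f i ≠ 0}

/-- `[i,j]` is a spread of `f`: a maximal interval contained in the support. -/
def IsSpread (f : ℕ → ℕ) (i j : ℕ) : Prop :=
  1 ≤ i ∧ i ≤ j ∧ (∀ k, i ≤ k → k ≤ j → f k ≠ 0) ∧ (i = 1 ∨ f (i - 1) = 0) ∧ f (j + 1) = 0

/-- `L(f)`: every other element of each spread, starting from the left end. -/
def Lset (f : ℕ → ℕ) : Set ℕ :=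
  {q | ∃ i j, IsSpread f i j ∧ i ≤ q ∧ q ≤ j ∧ (q - i) % 2 = 0}

/-- `R(f)`: every other element of each spread, starting from the right end. -/
def Rset (f : ℕ → ℕ) : Set ℕ :=
  {q | ∃ i j, IsSpread f i j ∧ i ≤ q ∧ q ≤ j ∧ (j - q) % 2 = 0}

/-- the 2-measure, as the cardinality of `R(f)`. -/
def mu2 (f : ℕ → ℕ) : ℕ := (Rset f).ncard

/-- The Burge demotion operator `∂`. -/
def dB (f : ℕ → ℕ) : ℕ → ℕ := fun n =>
  if n = 0 then 0
  else f n - (if n ∈ Rset f then 1 else 0) + (if n + 1 ∈ Rset f then 1 else 0)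

/-- The promotion operator `α`. -/
def aB (f : ℕ → ℕ) : ℕ → ℕ := fun n =>
  if n = 0 then 0
  else f n - (if n ∈ Lset f then 1 else 0) + (if n - 1 ∈ Lset f then 1 else 0)

/-- the shift `(f₂, f₃, …)`; on partitions this is `P ↦ P - 1`. -/
def tailF (f : ℕ → ℕ) : ℕ → ℕ := fun n => if n = 0 then 0 else f (n + 1)

/-- The operator `β`: `β(f) = (f₁ + 1, α(f₂, f₃, …))`. -/
def bB (f : ℕ → ℕ) : ℕ → ℕ := fun n =>
  if n = 0 then 0 else if n = 1 then f 1 + 1 else aB (tailF f) (n - 1)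

/-- the zero sequence (empty partition). -/
def zeroF : ℕ → ℕ := fun _ => 0

/-- `k` minimal with `∂^[k] f = 0`. -/
def chainK (f : ℕ → ℕ) : ℕ :=
  if h : ∃ m, dB^[m] f = zeroF then Nat.find h else 0

/-- The Burge code of `f`, as a list of letters; `false` = `a`, `true` = `b`.
The `i`-th letter (0-indexed `i`) records whether `∂^[i] f ∈ B`, i.e. `1 ∈ R(∂^[i] f)`. -/
def burgeCode (f : ℕ → ℕ) : List Bool :=
  (List.range (chainK f + 1)).map fun i => if 1 ∈ Rset (dB^[i] f) then true else false

/-- descent set of a word: 1-indexed positions `i` with `ωᵢ = b`, `ω_{i+1} = a`. -/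
def descSet (w : List Bool) : Set ℕ :=
  {i | 1 ≤ i ∧ w[i - 1]? = some true ∧ w[i]? = some false}

/-- the descent set of (the Burge code of) a partition. -/
def DesSet (f : ℕ → ℕ) : Set ℕ := descSet (burgeCode f)

/-- `Des(P)` regarded as a partition, via its frequency sequence. -/
def desFreq (f : ℕ → ℕ) : ℕ → ℕ := fun i => if i ∈ DesSet f then 1 else 0

/-- the 2-measure as the maximal size of a subset of the support without
consecutive pairs. -/
def twoMeasure (f : ℕ → ℕ) : ℕ :=
  sSup {n | ∃ T : Finset ℕ, (↑T : Set ℕ) ⊆ suppF f ∧ (∀ x ∈ T, x + 1 ∉ T) ∧ T.card = n}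

/-- evaluation at `i`: `ν_i(f) = i f_i + (i+1) f_{i+1} + 2 ∑_{j>i+1} f_j`, with `ν₀ = ν₁`. -/
def nuI (f : ℕ → ℕ) (i : ℕ) : ℕ :=
  (max i 1) * f (max i 1) + (max i 1 + 1) * f (max i 1 + 1)
    + 2 * ∑ᶠ j ∈ {j : ℕ | max i 1 + 1 < j}, f j

/-- annihilation at `i`: `ρ_i(f) = (f₁, …, f_{i-1}, f_{i+2}, f_{i+3}, …)`, with `ρ₀ = ρ₁`. -/
def rhoI (f : ℕ → ℕ) (i : ℕ) : ℕ → ℕ := fun n =>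
  if n = 0 then 0 else if n < max i 1 then f n else f (n + 2)

/-- `i ≥ 1` is right admissible in `f`. -/
def RightAdm (f : ℕ → ℕ) (i : ℕ) : Prop :=
  1 ≤ i ∧ 0 < f i ∧ (0 < f (i + 1) ∨ (f (i - 1) = 0 ∧ f (i + 1) = 0))

/-- `i ≥ 0` is left admissible in `f`. -/
def LeftAdm (f : ℕ → ℕ) (i : ℕ) : Prop :=
  0 < f (i + 1) ∧ (0 < f i ∨ (f i = 0 ∧ f (i + 2) = 0))

/-- `i` is a maximal index for `f`: `ν_i(f)` is nonzero and maximal. -/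
def MaxIdx (f : ℕ → ℕ) (i : ℕ) : Prop :=
  nuI f i ≠ 0 ∧ ∀ j, nuI f j ≤ nuI f i

end

section Aux

variable {f : ℕ → ℕ}

lemma spread_unique {i j i' j' q : ℕ} (h : IsSpread f i j) (h' : IsSpread f i' j')
    (hiq : i ≤ q) (hqj : q ≤ j) (hiq' : i' ≤ q) (hqj' : q ≤ j') : i = i' ∧ j = j' := by
  obtain ⟨h1, h2, h3, h4, h5⟩ := h
  obtain ⟨h1', h2', h3', h4', h5'⟩ := h'
  constructor
  · by_contra hne
    rcases Nat.lt_or_ge i i' with hlt | hge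
    · have hz : f (i' - 1) ≠ 0 := h3 (i' - 1) (by omega) (by omega)
      rcases h4' with hh | hh
      · omega
      · exact hz hh
    · have hlt : i' < i := by omega
      have hz : f (i - 1) ≠ 0 := h3' (i - 1) (by omega) (by omega)
      rcases h4 with hh | hh
      · omega
      · exact hz hh
  · by_contra hne
    rcases Nat.lt_or_ge j j' with hlt | hge
    · exact h3' (j + 1) (by omega) (by omega) h5
    · exact h3 (j' + 1) (by omega) (by omega) h5'

lemma exists_spread (hf : IsFreq f) {q : ℕ} (hq : q ∈ suppF f) :
    ∃ i j, IsSpread f i j ∧ i ≤ q ∧ q ≤ j := by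
  obtain ⟨hq1, hq2⟩ := hq
  obtain ⟨N, hN⟩ := hf.2.bddAbove
  have hup : ∃ n, f (q + n) = 0 := by
    refine ⟨N + 1, ?_⟩
    by_contra h
    have := hN (show q + (N + 1) ∈ Function.support f from h)
    omega
  set n := Nat.find hup with hn
  have hn0 : f (q + n) = 0 := Nat.find_spec hup
  have hnpos : 1 ≤ n := by
    rcases Nat.eq_zero_or_pos n with h0 | h0
    · exfalso; apply hq2; simpa [h0] using hn0
    · exact h0
  have hupk : ∀ k, q ≤ k → k ≤ q + n - 1 → f k ≠ 0 := by
    intro k hk1 hk2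
    have : ¬ f (q + (k - q)) = 0 := Nat.find_min hup (by omega)
    have e : q + (k - q) = k := by omega
    rwa [e] at this
  have hdn : ∃ m, q - m = 1 ∨ f (q - m - 1) = 0 := ⟨q - 1, Or.inl (by omega)⟩
  set m := Nat.find hdn with hm
  have hm0 : q - m = 1 ∨ f (q - m - 1) = 0 := Nat.find_spec hdn
  have hmle : m ≤ q - 1 := Nat.find_le (Or.inl (by omega))
  have hdnk : ∀ k, q - m ≤ k → k ≤ q → f k ≠ 0 := by
    intro k hk1 hk2
    rcases Nat.eq_or_lt_of_le hk2 with h | h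
    · rwa [h]
    · have hmin : ¬ (q - (q - k - 1) = 1 ∨ f (q - (q - k - 1) - 1) = 0) :=
        Nat.find_min hdn (by omega)
      push_neg at hmin
      have e : q - (q - k - 1) - 1 = k := by omega
      rw [e] at hmin
      exact hmin.2
  refine ⟨q - m, q + n - 1, ⟨by omega, by omega, ?_, ?_, ?_⟩, by omega, by omega⟩
  · intro k hk1 hk2
    rcases le_or_gt k q with h | h
    · exact hdnk k hk1 h
    · exact hupk k (by omega) hk2
  · rcases hm0 with h | h
    · exact Or.inl h
    · exact Or.inr h
  · have e : q + n - 1 + 1 = q + n := by omega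
    rw [e]; exact hn0

lemma Rset_subset : Rset f ⊆ suppF f := by
  rintro q ⟨i, j, hsp, hiq, hqj, _⟩
  exact ⟨le_trans hsp.1 hiq, hsp.2.2.1 q hiq hqj⟩

lemma Lset_subset : Lset f ⊆ suppF f := by
  rintro q ⟨i, j, hsp, hiq, hqj, _⟩
  exact ⟨le_trans hsp.1 hiq, hsp.2.2.1 q hiq hqj⟩

lemma Rset_no_consec {q : ℕ} (h : q ∈ Rset f) (h' : q + 1 ∈ Rset f) : False := by
  obtain ⟨i, j, hsp, hiq, hqj, hpar⟩ := h
  obtain ⟨i', j', hsp', hiq', hqj', hpar'⟩ := h'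
  have hfq : f q ≠ 0 := hsp.2.2.1 q hiq hqj
  have h1i : 1 ≤ i := hsp.1
  have hle : i' ≤ q := by
    by_contra hc
    have : i' = q + 1 := by omega
    rcases hsp'.2.2.2.1 with hh | hh
    · omega
    · rw [this] at hh; simp at hh; exact hfq hh
  obtain ⟨e1, e2⟩ := spread_unique hsp hsp' hiq hqj hle (by omega)
  omega

noncomputable def phiF (f : ℕ → ℕ) (q : ℕ) : ℕ :=
  if h : ∃ i j, IsSpread f i j ∧ i ≤ q ∧ q ≤ j then
    h.choose + h.choose_spec.choose - q
  else q

lemma phiF_spec {i j q : ℕ} (hsp : IsSpread f i j) (hiq : i ≤ q) (hqj : q ≤ j) :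
    phiF f q = i + j - q := by
  have h : ∃ i j, IsSpread f i j ∧ i ≤ q ∧ q ≤ j := ⟨i, j, hsp, hiq, hqj⟩
  rw [phiF, dif_pos h]
  obtain ⟨hsp', hiq', hqj'⟩ := h.choose_spec.choose_spec
  obtain ⟨e1, e2⟩ := spread_unique hsp' hsp hiq' hqj' hiq hqj
  omega

lemma phiF_mapsTo_LR : Set.MapsTo (phiF f) (Lset f) (Rset f) := by
  rintro q ⟨i, j, hsp, hiq, hqj, hpar⟩
  rw [phiF_spec hsp hiq hqj]
  exact ⟨i, j, hsp, by omega, by omega, by omega⟩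

lemma phiF_mapsTo_RL : Set.MapsTo (phiF f) (Rset f) (Lset f) := by
  rintro q ⟨i, j, hsp, hiq, hqj, hpar⟩
  rw [phiF_spec hsp hiq hqj]
  exact ⟨i, j, hsp, by omega, by omega, by omega⟩

lemma phiF_invol {i j q : ℕ} (hsp : IsSpread f i j) (hiq : i ≤ q) (hqj : q ≤ j) :
    phiF f (phiF f q) = q := by
  rw [phiF_spec hsp hiq hqj, phiF_spec hsp (by omega) (by omega)]
  omega

lemma phiF_bijOn : Set.BijOn (phiF f) (Lset f) (Rset f) := by
  refine Set.InvOn.bijOn ⟨?_, ?_⟩ phiF_mapsTo_LR phiF_mapsTo_RL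
  · rintro q ⟨i, j, hsp, hiq, hqj, _⟩
    exact phiF_invol hsp hiq hqj
  · rintro q ⟨i, j, hsp, hiq, hqj, _⟩
    exact phiF_invol hsp hiq hqj

lemma suppF_finite (hf : IsFreq f) : (suppF f).Finite :=
  hf.2.subset (fun x hx => hx.2)

lemma Rset_finite (hf : IsFreq f) : (Rset f).Finite :=
  (suppF_finite hf).subset Rset_subset

lemma Lset_ncard_eq (hf : IsFreq f) : (Lset f).ncard = (Rset f).ncard := by
  rw [← phiF_bijOn.image_eq, Set.ncard_image_of_injOn phiF_bijOn.injOn]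

lemma card_le_Rset (hf : IsFreq f) (T : Finset ℕ) (hsub : (↑T : Set ℕ) ⊆ suppF f)
    (hnc : ∀ x ∈ T, x + 1 ∉ T) : T.card ≤ (Rset f).ncard := by
  set g : ℕ → ℕ := fun t => if t ∈ Rset f then t else t + 1 with hg
  have hmem : ∀ t ∈ (T : Set ℕ), g t ∈ Rset f := by
    intro t ht
    by_cases h : t ∈ Rset f
    · simpa [hg, h] using h
    · obtain ⟨i, j, hsp, hiq, hqj⟩ := exists_spread hf (hsub ht)
      have hpar : (j - t) % 2 = 1 := by
        by_contra hc
        exact h ⟨i, j, hsp, hiq, hqj, by omega⟩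
      have h1 : t + 1 ∈ Rset f := ⟨i, j, hsp, by omega, by omega, by omega⟩
      simpa [hg, h] using h1
  have hinj : Set.InjOn g (↑T : Set ℕ) := by
    intro a ha b hb hab
    by_contra hne
    by_cases hA : a ∈ Rset f <;> by_cases hB : b ∈ Rset f <;>
      simp only [hg, if_pos, if_neg, hA, hB, if_true, if_false] at hab
    · exact hne hab
    · exact hnc b hb (by rw [← hab]; exact ha)
    · exact hnc a ha (by rw [hab]; exact hb)
    · exact hne (by omega)
  calc T.card = (↑T : Set ℕ).ncard := (Set.ncard_coe_finset T).symm
    _ = (g '' ↑T).ncard := (Set.ncard_image_of_injOn hinj).symm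
    _ ≤ (Rset f).ncard := Set.ncard_le_ncard (by rintro x ⟨t, ht, rfl⟩; exact hmem t ht)
          (Rset_finite hf)

end Aux

/-- the 2-measure of `f` equals the maximum size of a subset of the
support with no two consecutive integers, and this maximum equals the common
cardinality of `L(f)` and `R(f)`. -/
theorem stmt1 (f : ℕ → ℕ) (hf : IsFreq f) :
    IsGreatest {n | ∃ T : Finset ℕ, (↑T : Set ℕ) ⊆ suppF f ∧ (∀ x ∈ T, x + 1 ∉ T) ∧ T.card = n}
      (twoMeasure f) ∧
    twoMeasure f = (Lset f).ncard ∧ twoMeasure f = (Rset f).ncard := by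
  set A := {n | ∃ T : Finset ℕ, (↑T : Set ℕ) ⊆ suppF f ∧ (∀ x ∈ T, x + 1 ∉ T) ∧ T.card = n}
    with hA
  have hRmem : (Rset f).ncard ∈ A := by
    refine ⟨(Rset_finite hf).toFinset, ?_, ?_, ?_⟩
    · intro x hx
      simp only [Finset.coe_sort_coe, Set.Finite.coe_toFinset] at hx
      exact Rset_subset hx
    · intro x hx hx1
      simp only [Set.Finite.mem_toFinset] at hx hx1
      exact Rset_no_consec hx hx1
    · rw [Set.ncard_eq_toFinset_card _ (Rset_finite hf)]
  have hub : ∀ n ∈ A, n ≤ (Rset f).ncard := by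
    rintro n ⟨T, hsub, hnc, rfl⟩
    exact card_le_Rset hf T hsub hnc
  have hbdd : BddAbove A := ⟨(Rset f).ncard, hub⟩
  have hne : A.Nonempty := ⟨_, hRmem⟩
  have hmem : twoMeasure f ∈ A := Nat.sSup_mem hne hbdd
  have heq : twoMeasure f = (Rset f).ncard :=
    le_antisymm (hub _ hmem) (le_csSup hbdd hRmem)
  exact ⟨⟨hmem, fun n hn => le_csSup hbdd hn⟩, by rw [heq, Lset_ncard_eq hf], heq⟩
end

section
/- The operator ∂ : F → F is two-to-one: it restricts to a bijection from A := {f ∈ F : 1 ∉ R(f)} onto F with inverse α, and to a bijection from B := {f ∈ F : 1 ∈ R(f)} onto F with inverse β. In particular ∂(α(f)) = f and ∂(β(f)) = f for all f ∈ F. -/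
open scoped Classical

namespace Burge2

/-- distance to first zero at or to the right of `q`. -/
noncomputable def dzF (f : ℕ → ℕ) (q : ℕ) : ℕ := sInf {t : ℕ | f (q + t) = 0}

/-- distance to first zero at or to the left of `q`. -/
noncomputable def ezF (f : ℕ → ℕ) (q : ℕ) : ℕ := sInf {s : ℕ | f (q - s) = 0}

lemma freq_bound {f : ℕ → ℕ} (hf : IsFreq f) : ∃ N, ∀ m, N ≤ m → f m = 0 := by
  obtain ⟨N, hN⟩ := hf.2.bddAbove
  refine ⟨N + 1, fun m hm => ?_⟩
  by_contra h
  exact absurd (hN (show m ∈ Function.support f from h)) (by omega)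

lemma exZ {f : ℕ → ℕ} (hf : IsFreq f) (q : ℕ) : ∃ t, f (q + t) = 0 := by
  obtain ⟨N, hN⟩ := freq_bound hf
  exact ⟨N, hN _ (by omega)⟩

lemma dz_mem {f : ℕ → ℕ} (hf : IsFreq f) (q : ℕ) : f (q + dzF f q) = 0 :=
  Nat.sInf_mem (exZ hf q)

lemma dz_lt {f : ℕ → ℕ} {q r : ℕ} (h : r < dzF f q) : f (q + r) ≠ 0 :=
  fun h0 => Nat.notMem_of_lt_sInf h h0

lemma dz_eq_zero {f : ℕ → ℕ} {q : ℕ} (h : f q = 0) : dzF f q = 0 :=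
  Nat.le_zero.mp (Nat.sInf_le (show f (q + 0) = 0 by simpa using h))

lemma dz_succ {f : ℕ → ℕ} (hf : IsFreq f) {q : ℕ} (hq : f q ≠ 0) :
    dzF f q = dzF f (q + 1) + 1 := by
  have hm : f (q + 1 + dzF f (q + 1)) = 0 := dz_mem hf (q + 1)
  have h1 : dzF f q ≤ dzF f (q + 1) + 1 :=
    Nat.sInf_le (show f (q + (dzF f (q + 1) + 1)) = 0 by
      rw [show q + (dzF f (q + 1) + 1) = q + 1 + dzF f (q + 1) by omega]; exact hm)
  have h2 : ¬ dzF f q < dzF f (q + 1) + 1 := by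
    intro h
    have hmem : f (q + dzF f q) = 0 := dz_mem hf q
    have hne : dzF f q ≠ 0 := fun h0 => hq (by simpa [h0] using hmem)
    have hmem' : f (q + 1 + (dzF f q - 1)) = 0 := by
      rw [show q + 1 + (dzF f q - 1) = q + dzF f q by omega]; exact hmem
    exact Nat.notMem_of_lt_sInf (show dzF f q - 1 < dzF f (q + 1) by omega) hmem'
  omega

lemma ez_mem {f : ℕ → ℕ} (hf : IsFreq f) (q : ℕ) : f (q - ezF f q) = 0 :=
  Nat.sInf_mem (⟨q, show f (q - q) = 0 by simpa using hf.1⟩ :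
    {s : ℕ | f (q - s) = 0}.Nonempty)

lemma ez_eq_zero {f : ℕ → ℕ} {q : ℕ} (h : f q = 0) : ezF f q = 0 :=
  Nat.le_zero.mp (Nat.sInf_le (show f (q - 0) = 0 by simpa using h))

lemma ez_succ {f : ℕ → ℕ} (hf : IsFreq f) {q : ℕ} (hq : f (q + 1) ≠ 0) :
    ezF f (q + 1) = ezF f q + 1 := by
  have hm : f (q - ezF f q) = 0 := ez_mem hf q
  have h1 : ezF f (q + 1) ≤ ezF f q + 1 :=
    Nat.sInf_le (show f (q + 1 - (ezF f q + 1)) = 0 by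
      rw [show q + 1 - (ezF f q + 1) = q - ezF f q by omega]; exact hm)
  have h2 : ¬ ezF f (q + 1) < ezF f q + 1 := by
    intro h
    have hmem : f (q + 1 - ezF f (q + 1)) = 0 := ez_mem hf (q + 1)
    have hne : ezF f (q + 1) ≠ 0 := by
      intro h0; rw [h0] at hmem; simp at hmem; exact hq hmem
    have hmem' : f (q - (ezF f (q + 1) - 1)) = 0 := by
      rw [show q - (ezF f (q + 1) - 1) = q + 1 - ezF f (q + 1) by omega]; exact hmem
    exact Nat.notMem_of_lt_sInf (show ezF f (q + 1) - 1 < ezF f q by omega) hmem'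
  omega

lemma R_nonzero {f : ℕ → ℕ} {q : ℕ} (h : q ∈ Rset f) : f q ≠ 0 := by
  obtain ⟨i, j, hs, hiq, hqj, _⟩ := h
  exact hs.2.2.1 q hiq hqj

lemma L_nonzero {f : ℕ → ℕ} {q : ℕ} (h : q ∈ Lset f) : f q ≠ 0 := by
  obtain ⟨i, j, hs, hiq, hqj, _⟩ := h
  exact hs.2.2.1 q hiq hqj

lemma R_mem_iff {f : ℕ → ℕ} (hf : IsFreq f) (q : ℕ) :
    q ∈ Rset f ↔ f q ≠ 0 ∧ dzF f q % 2 = 1 := by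
  constructor
  · rintro ⟨i, j, ⟨hi1, hij, hnz, hleft, hright⟩, hiq, hqj, hpar⟩
    have hfq : f q ≠ 0 := hnz q hiq hqj
    have hdz : dzF f q = j + 1 - q := by
      have h1 : dzF f q ≤ j + 1 - q :=
        Nat.sInf_le (show f (q + (j + 1 - q)) = 0 by
          rw [show q + (j + 1 - q) = j + 1 by omega]; exact hright)
      have h2 : ¬ dzF f q < j + 1 - q := by
        intro hlt
        exact hnz (q + dzF f q) (by omega) (by omega) (dz_mem hf q)
      omega
    exact ⟨hfq, by omega⟩
  · rintro ⟨hfq, hpar⟩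
    have hq1 : 1 ≤ q := by
      rcases Nat.eq_zero_or_pos q with h | h
      · exact absurd (h ▸ hf.1) hfq
      · exact h
    set t := dzF f q with htdef
    have htmem : f (q + t) = 0 := dz_mem hf q
    have ht1 : 1 ≤ t := by
      rcases Nat.eq_zero_or_pos t with h | h
      · rw [h] at htmem; simp at htmem; exact absurd htmem hfq
      · exact h
    set s := ezF f q with hsdef
    have hsmem : f (q - s) = 0 := ez_mem hf q
    have hs1 : 1 ≤ s := by
      rcases Nat.eq_zero_or_pos s with h | h
      · rw [h] at hsmem; simp at hsmem; exact absurd hsmem hfq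
      · exact h
    have hsq : s ≤ q := Nat.sInf_le (show f (q - q) = 0 by simpa using hf.1)
    refine ⟨q - s + 1, q + t - 1, ⟨by omega, by omega, ?_, Or.inr ?_, ?_⟩,
      by omega, by omega, by omega⟩
    · intro k hk1 hk2
      rcases le_or_gt k q with hk | hk
      · have : q - k < s := by omega
        have := Nat.notMem_of_lt_sInf (s := {s : ℕ | f (q - s) = 0}) this
        simp only [Set.mem_setOf_eq] at this
        rwa [show q - (q - k) = k by omega] at this
      · have : k - q < t := by omega
        have := Nat.notMem_of_lt_sInf (s := {t : ℕ | f (q + t) = 0}) this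
        simp only [Set.mem_setOf_eq] at this
        rwa [show q + (k - q) = k by omega] at this
    · rw [show q - s + 1 - 1 = q - s by omega]; exact hsmem
    · rw [show q + t - 1 + 1 = q + t by omega]; exact htmem

lemma L_mem_iff {f : ℕ → ℕ} (hf : IsFreq f) (q : ℕ) :
    q ∈ Lset f ↔ f q ≠ 0 ∧ ezF f q % 2 = 1 := by
  constructor
  · rintro ⟨i, j, ⟨hi1, hij, hnz, hleft, hright⟩, hiq, hqj, hpar⟩
    have hfq : f q ≠ 0 := hnz q hiq hqj
    have hez : ezF f q = q - i + 1 := by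
      have h1 : ezF f q ≤ q - i + 1 := by
        refine Nat.sInf_le (show f (q - (q - i + 1)) = 0 from ?_)
        rcases hleft with h | h
        · rw [show q - (q - i + 1) = 0 by omega]; exact hf.1
        · rw [show q - (q - i + 1) = i - 1 by omega]; exact h
      have h2 : ¬ ezF f q < q - i + 1 := by
        intro hlt
        exact hnz (q - ezF f q) (by omega) (by omega) (ez_mem hf q)
      omega
    exact ⟨hfq, by omega⟩
  · rintro ⟨hfq, hpar⟩
    have hq1 : 1 ≤ q := by
      rcases Nat.eq_zero_or_pos q with h | h
      · exact absurd (h ▸ hf.1) hfq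
      · exact h
    set t := dzF f q with htdef
    have htmem : f (q + t) = 0 := dz_mem hf q
    have ht1 : 1 ≤ t := by
      rcases Nat.eq_zero_or_pos t with h | h
      · rw [h] at htmem; simp at htmem; exact absurd htmem hfq
      · exact h
    set s := ezF f q with hsdef
    have hsmem : f (q - s) = 0 := ez_mem hf q
    have hs1 : 1 ≤ s := by
      rcases Nat.eq_zero_or_pos s with h | h
      · rw [h] at hsmem; simp at hsmem; exact absurd hsmem hfq
      · exact h
    have hsq : s ≤ q := Nat.sInf_le (show f (q - q) = 0 by simpa using hf.1)
    refine ⟨q - s + 1, q + t - 1, ⟨by omega, by omega, ?_, Or.inr ?_, ?_⟩,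
      by omega, by omega, by omega⟩
    · intro k hk1 hk2
      rcases le_or_gt k q with hk | hk
      · have : q - k < s := by omega
        have := Nat.notMem_of_lt_sInf (s := {s : ℕ | f (q - s) = 0}) this
        simp only [Set.mem_setOf_eq] at this
        rwa [show q - (q - k) = k by omega] at this
      · have : k - q < t := by omega
        have := Nat.notMem_of_lt_sInf (s := {t : ℕ | f (q + t) = 0}) this
        simp only [Set.mem_setOf_eq] at this
        rwa [show q + (k - q) = k by omega] at this
    · rw [show q - s + 1 - 1 = q - s by omega]; exact hsmem
    · rw [show q + t - 1 + 1 = q + t by omega]; exact htmem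

end Burge2
namespace Burge2

lemma R_base {f : ℕ → ℕ} (hf : IsFreq f) {q : ℕ} (hq : f q ≠ 0) (h1 : f (q + 1) = 0) :
    q ∈ Rset f := by
  rw [R_mem_iff hf]
  refine ⟨hq, ?_⟩
  have hle : dzF f q ≤ 1 := Nat.sInf_le (show f (q + 1) = 0 from h1)
  have hne : dzF f q ≠ 0 := by
    intro h0
    have := dz_mem hf q; rw [h0] at this; simp at this; exact hq this
  omega

lemma R_step {f : ℕ → ℕ} (hf : IsFreq f) {q : ℕ} (hq : f q ≠ 0) (h1 : f (q + 1) ≠ 0) :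
    (q ∈ Rset f ↔ q + 2 ∈ Rset f) := by
  rw [R_mem_iff hf, R_mem_iff hf]
  have e : dzF f q = dzF f (q + 2) + 2 := by
    rw [dz_succ hf hq, dz_succ hf h1, show q + 1 + 1 = q + 2 from rfl]
  constructor
  · rintro ⟨-, hp⟩
    have h2 : f (q + 2) ≠ 0 := by
      intro h0
      have := dz_eq_zero (f := f) (q := q + 2) h0
      omega
    exact ⟨h2, by omega⟩
  · rintro ⟨-, hp⟩
    exact ⟨hq, by omega⟩

lemma R_pair {f : ℕ → ℕ} (hf : IsFreq f) {q : ℕ} (hq : f q ≠ 0) :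
    q ∈ Rset f ∨ q + 1 ∈ Rset f := by
  have e : dzF f q = dzF f (q + 1) + 1 := dz_succ hf hq
  by_cases hp : dzF f q % 2 = 1
  · exact Or.inl ((R_mem_iff hf q).mpr ⟨hq, hp⟩)
  · have hp1 : dzF f (q + 1) % 2 = 1 := by omega
    have h1 : f (q + 1) ≠ 0 := by
      intro h0
      have := dz_eq_zero (f := f) (q := q + 1) h0
      omega
    exact Or.inr ((R_mem_iff hf (q + 1)).mpr ⟨h1, hp1⟩)

lemma R_not_both {f : ℕ → ℕ} (hf : IsFreq f) {q : ℕ} (h : q ∈ Rset f) :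
    q + 1 ∉ Rset f := by
  intro h2
  rw [R_mem_iff hf] at h h2
  have := dz_succ hf h.1
  omega

lemma L_base {f : ℕ → ℕ} (hf : IsFreq f) {q : ℕ} (hq : f q ≠ 0) (h1 : f (q - 1) = 0) :
    q ∈ Lset f := by
  rw [L_mem_iff hf]
  refine ⟨hq, ?_⟩
  have hle : ezF f q ≤ 1 := Nat.sInf_le (show f (q - 1) = 0 from h1)
  have hne : ezF f q ≠ 0 := by
    intro h0
    have := ez_mem hf q; rw [h0] at this; simp at this; exact hq this
  omega

lemma L_step {f : ℕ → ℕ} (hf : IsFreq f) {q : ℕ} (hq : f (q + 1) ≠ 0) (h1 : f q ≠ 0) :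
    (q + 1 ∈ Lset f ↔ q - 1 ∈ Lset f) := by
  have hq1 : 1 ≤ q := by
    rcases Nat.eq_zero_or_pos q with h | h
    · exact absurd (h ▸ hf.1) h1
    · exact h
  have e1 : ezF f (q + 1) = ezF f q + 1 := ez_succ hf hq
  have e2 : ezF f q = ezF f (q - 1) + 1 := by
    have := ez_succ hf (q := q - 1) (by rw [show q - 1 + 1 = q by omega]; exact h1)
    rw [show q - 1 + 1 = q by omega] at this
    exact this
  rw [L_mem_iff hf, L_mem_iff hf]
  constructor
  · rintro ⟨-, hp⟩
    have hz : f (q - 1) ≠ 0 := by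
      intro h0
      have := ez_eq_zero (f := f) (q := q - 1) h0
      omega
    exact ⟨hz, by omega⟩
  · rintro ⟨-, hp⟩
    exact ⟨hq, by omega⟩

lemma L_pair {f : ℕ → ℕ} (hf : IsFreq f) {q : ℕ} (hq : f q ≠ 0) :
    q ∈ Lset f ∨ q - 1 ∈ Lset f := by
  have hq1 : 1 ≤ q := by
    rcases Nat.eq_zero_or_pos q with h | h
    · exact absurd (h ▸ hf.1) hq
    · exact h
  have e : ezF f q = ezF f (q - 1) + 1 := by
    have := ez_succ hf (q := q - 1) (by rw [show q - 1 + 1 = q by omega]; exact hq)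
    rw [show q - 1 + 1 = q by omega] at this
    exact this
  by_cases hp : ezF f q % 2 = 1
  · exact Or.inl ((L_mem_iff hf q).mpr ⟨hq, hp⟩)
  · have hp1 : ezF f (q - 1) % 2 = 1 := by omega
    have h1 : f (q - 1) ≠ 0 := by
      intro h0
      have := ez_eq_zero (f := f) (q := q - 1) h0
      omega
    exact Or.inr ((L_mem_iff hf (q - 1)).mpr ⟨h1, hp1⟩)

lemma L_not_both {f : ℕ → ℕ} (hf : IsFreq f) {q : ℕ} (h : q ∈ Lset f) :
    q + 1 ∉ Lset f := by
  intro h2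
  rw [L_mem_iff hf] at h h2
  have := ez_succ hf h2.1
  omega

lemma L_one_le {f : ℕ → ℕ} {q : ℕ} (h : q ∈ Lset f) : 1 ≤ q := by
  obtain ⟨i, j, hs, hiq, hqj, _⟩ := h
  exact le_trans hs.1 hiq

lemma aB_val (f : ℕ → ℕ) {n : ℕ} (hn : n ≠ 0) :
    aB f n = f n - (if n ∈ Lset f then 1 else 0) + (if n - 1 ∈ Lset f then 1 else 0) := by
  simp [aB, hn]

lemma dB_val (f : ℕ → ℕ) {n : ℕ} (hn : n ≠ 0) :
    dB f n = f n - (if n ∈ Rset f then 1 else 0) + (if n + 1 ∈ Rset f then 1 else 0) := by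
  simp [dB, hn]

lemma IsFreq_aB {f : ℕ → ℕ} (hf : IsFreq f) : IsFreq (aB f) := by
  refine ⟨by simp [aB], ?_⟩
  have hsub : Function.support (aB f) ⊆
      Function.support f ∪ (fun l => l + 1) '' Lset f := by
    intro n hn
    simp only [Function.mem_support] at hn
    by_cases hn0 : n = 0
    · simp [aB, hn0] at hn
    rw [aB_val f hn0] at hn
    by_cases h1 : n - 1 ∈ Lset f
    · exact Or.inr ⟨n - 1, h1, by beta_reduce; omega⟩
    · left
      simp only [h1, if_neg, ite_false] at hn
      have : f n ≠ 0 := by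
        intro h0; rw [h0] at hn; simp at hn
      exact this
  exact (hf.2.union ((hf.2.subset (fun q h => L_nonzero h)).image _)).subset hsub

lemma IsFreq_dB {f : ℕ → ℕ} (hf : IsFreq f) : IsFreq (dB f) := by
  refine ⟨by simp [dB], ?_⟩
  have hsub : Function.support (dB f) ⊆
      Function.support f ∪ (fun r => r - 1) '' Rset f := by
    intro n hn
    simp only [Function.mem_support] at hn
    by_cases hn0 : n = 0
    · simp [dB, hn0] at hn
    rw [dB_val f hn0] at hn
    by_cases h1 : n + 1 ∈ Rset f
    · exact Or.inr ⟨n + 1, h1, by beta_reduce; omega⟩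
    · left
      simp only [h1, ite_false] at hn
      intro h0; rw [h0] at hn
      exact (by split at hn <;> omega : False)
  exact (hf.2.union ((hf.2.subset (fun q h => R_nonzero h)).image _)).subset hsub

lemma IsFreq_tail {f : ℕ → ℕ} (hf : IsFreq f) : IsFreq (tailF f) := by
  refine ⟨by simp [tailF], ?_⟩
  have hsub : Function.support (tailF f) ⊆ (fun n => n - 1) '' Function.support f := by
    intro n hn
    simp only [Function.mem_support, tailF] at hn
    by_cases hn0 : n = 0
    · simp [hn0] at hn
    rw [if_neg hn0] at hn
    exact ⟨n + 1, hn, by beta_reduce; omega⟩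
  exact (hf.2.image _).subset hsub

lemma IsFreq_bB {f : ℕ → ℕ} (hf : IsFreq f) : IsFreq (bB f) := by
  refine ⟨by simp [bB], ?_⟩
  have hsub : Function.support (bB f) ⊆
      {1} ∪ (fun n => n + 1) '' Function.support (aB (tailF f)) := by
    intro n hn
    simp only [Function.mem_support, bB] at hn
    by_cases hn0 : n = 0
    · simp [hn0] at hn
    by_cases hn1 : n = 1
    · exact Or.inl hn1
    rw [if_neg hn0, if_neg hn1] at hn
    exact Or.inr ⟨n - 1, hn, by beta_reduce; omega⟩
  exact ((Set.finite_singleton 1).union (((IsFreq_aB (IsFreq_tail hf)).2).image _)).subset hsub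

end Burge2
namespace Burge2

lemma M1 {f : ℕ → ℕ} (hf : IsFreq f) :
    ∀ q, (q ∈ Lset f → q + 1 ∈ Rset (aB f)) ∧ (q ∉ Lset f → q + 1 ∉ Rset (aB f)) := by
  have hg : IsFreq (aB f) := IsFreq_aB hf
  obtain ⟨N1, hN1⟩ := freq_bound hf
  obtain ⟨N2, hN2⟩ := freq_bound hg
  suffices h : ∀ k q, N1 + N2 ≤ q + k →
      ((q ∈ Lset f → q + 1 ∈ Rset (aB f)) ∧ (q ∉ Lset f → q + 1 ∉ Rset (aB f))) by
    exact fun q => h (N1 + N2) q (by omega)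
  intro k
  induction k with
  | zero =>
    intro q hq
    constructor
    · intro hL
      exact absurd (L_nonzero hL) (by simp [hN1 q (by omega)])
    · intro _ hR
      exact (R_nonzero hR) (hN2 (q + 1) (by omega))
  | succ k ih =>
    intro q hq
    have P1 := ih (q + 1) (by omega)
    have P2 := ih (q + 2) (by omega)
    constructor
    · intro hL
      have hfq : f q ≠ 0 := L_nonzero hL
      have hnb : q + 1 ∉ Lset f := L_not_both hf hL
      have hgq1 : aB f (q + 1) = f (q + 1) + 1 := by
        rw [aB_val f (show q + 1 ≠ 0 by omega)]
        simp [hnb, hL]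
      by_cases hg2 : aB f (q + 2) = 0
      · exact R_base hg (by rw [hgq1]; omega) (by rwa [show q + 1 + 1 = q + 2 from rfl])
      · have hf2 : f (q + 2) ≠ 0 := by
          intro h0
          apply hg2
          rw [aB_val f (show q + 2 ≠ 0 by omega)]
          have hn2 : q + 2 ∉ Lset f := fun h => L_nonzero h h0
          have e : q + 2 - 1 = q + 1 := by omega
          rw [e]
          simp [hn2, hnb, h0]
        have hL2 : q + 2 ∈ Lset f := by
          by_cases h1 : f (q + 1) = 0
          · exact L_base hf hf2 (by simpa using h1)
          · have := L_step hf (q := q + 1) (by simpa using hf2) h1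
            simp only [show q + 1 + 1 = q + 2 from rfl, Nat.add_sub_cancel] at this
            exact this.mpr hL
        have h3 := P2.1 hL2
        have := R_step hg (q := q + 1) (by rw [hgq1]; omega) (by simpa using hg2)
        rw [show q + 1 + 2 = q + 2 + 1 by omega] at this
        exact this.mpr h3
    · intro hL
      by_cases hg1 : aB f (q + 1) = 0
      · exact fun hR => R_nonzero hR hg1
      · have hf1 : f (q + 1) ≠ 0 := by
          intro h0
          apply hg1
          rw [aB_val f (show q + 1 ≠ 0 by omega)]
          have h2 : q + 1 ∉ Lset f := fun h => L_nonzero h h0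
          simp [h0, h2, hL]
        have hL1 : q + 1 ∈ Lset f := by
          rcases L_pair hf hf1 with h | h
          · exact h
          · simp only [Nat.add_sub_cancel] at h
            exact absurd h hL
        have hnb2 : q + 2 ∉ Lset f := by
          have := L_not_both hf hL1
          rwa [show q + 1 + 1 = q + 2 from rfl] at this
        have hg2 : aB f (q + 2) = f (q + 2) + 1 := by
          rw [aB_val f (show q + 2 ≠ 0 by omega)]
          have e : q + 2 - 1 = q + 1 := by omega
          rw [e]
          simp [hnb2, hL1]
        have h3 := P1.1 hL1
        have h4 := R_not_both hg h3
        intro hR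
        have := R_step hg (q := q + 1) hg1 (by rw [show q + 1 + 1 = q + 2 from rfl, hg2]; omega)
        rw [show q + 1 + 2 = q + 1 + 1 + 1 by omega] at this
        exact h4 (this.mp hR)

lemma M2 {f : ℕ → ℕ} (hf : IsFreq f) (h1R : 1 ∉ Rset f) :
    ∀ q, (q + 1 ∈ Rset f → q ∈ Lset (dB f)) ∧ (q + 1 ∉ Rset f → q ∉ Lset (dB f)) := by
  have hh : IsFreq (dB f) := IsFreq_dB hf
  intro q
  induction q using Nat.strong_induction_on with
  | _ q ih =>
    constructor
    · intro hR
      have hq1 : 1 ≤ q := by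
        rcases Nat.eq_zero_or_pos q with h | h
        · rw [h] at hR; exact absurd hR h1R
        · exact h
      have hqR : q ∉ Rset f := fun h => R_not_both hf h hR
      have hhq : dB f q = f q + 1 := by
        rw [dB_val f (show q ≠ 0 by omega)]
        simp [hqR, hR]
      by_cases hq0 : dB f (q - 1) = 0
      · exact L_base hh (by rw [hhq]; omega) hq0
      · have hq2 : 2 ≤ q := by
          rcases Nat.lt_or_ge q 2 with h | h
          · interval_cases q
            · exact absurd (by simp [dB] : dB f 0 = 0) hq0
          · exact h
        have hfq1' : f (q - 1) ≠ 0 := by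
          intro h0
          apply hq0
          rw [dB_val f (show q - 1 ≠ 0 by omega), show q - 1 + 1 = q by omega]
          have h2 : q - 1 ∉ Rset f := fun h => R_nonzero h h0
          simp [h0, h2, hqR]
        have hR1 : q - 1 ∈ Rset f := by
          rcases R_pair hf hfq1' with h | h
          · exact h
          · rw [show q - 1 + 1 = q by omega] at h; exact absurd h hqR
        have hIH := (ih (q - 2) (by omega)).1 (by rw [show q - 2 + 1 = q - 1 by omega]; exact hR1)
        have hst := L_step hh (q := q - 1)
          (by rw [show q - 1 + 1 = q by omega, hhq]; omega) hq0
        rw [show q - 1 + 1 = q by omega, show q - 1 - 1 = q - 2 by omega] at hst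
        exact hst.mpr hIH
    · intro hR
      by_cases hq : dB f q = 0
      · exact fun h => L_nonzero h hq
      have hq1 : 1 ≤ q := by
        rcases Nat.eq_zero_or_pos q with h | h
        · exact absurd (by simp [dB, h] : dB f q = 0) hq
        · exact h
      have hfq : f q ≠ 0 := by
        intro h0
        apply hq
        rw [dB_val f (show q ≠ 0 by omega)]
        have h2 : q ∉ Rset f := fun h => R_nonzero h h0
        simp [h0, h2, hR]
      have hqR : q ∈ Rset f := by
        rcases R_pair hf hfq with h | h
        · exact h
        · exact absurd h hR
      have hq2 : 2 ≤ q := by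
        rcases Nat.lt_or_ge q 2 with h | h
        · interval_cases q
          · exact absurd hqR h1R
        · exact h
      have hq0 : dB f (q - 1) ≠ 0 := by
        rw [dB_val f (show q - 1 ≠ 0 by omega), show q - 1 + 1 = q by omega]
        simp only [hqR, if_pos]
        omega
      have hIH := (ih (q - 2) (by omega)).2 (by
        rw [show q - 2 + 1 = q - 1 by omega]
        intro h
        exact (R_not_both hf h) (by rwa [show q - 1 + 1 = q by omega]))
      have hst := L_step hh (q := q - 1)
        (by rw [show q - 1 + 1 = q by omega]; exact hq) hq0
      rw [show q - 1 + 1 = q by omega, show q - 1 - 1 = q - 2 by omega] at hst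
      exact fun h => hIH (hst.mp h)

lemma M3 {f : ℕ → ℕ} (hf : IsFreq f) (h1R : 1 ∈ Rset f) :
    ∀ q, (q + 2 ∈ Rset f → q ∈ Lset (tailF (dB f))) ∧
      (q + 2 ∉ Rset f → q ∉ Lset (tailF (dB f))) := by
  have hT : IsFreq (tailF (dB f)) := IsFreq_tail (IsFreq_dB hf)
  have h2R : 2 ∉ Rset f := by
    have := R_not_both hf h1R
    simpa using this
  have hTval : ∀ n, n ≠ 0 → tailF (dB f) n =
      f (n + 1) - (if n + 1 ∈ Rset f then 1 else 0) + (if n + 2 ∈ Rset f then 1 else 0) := by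
    intro n hn
    rw [show tailF (dB f) n = dB f (n + 1) by simp [tailF, hn],
      dB_val f (show n + 1 ≠ 0 by omega), show n + 1 + 1 = n + 2 from rfl]
  intro q
  induction q using Nat.strong_induction_on with
  | _ q ih =>
    constructor
    · intro hR
      have hq1 : 1 ≤ q := by
        rcases Nat.eq_zero_or_pos q with h | h
        · rw [h] at hR; exact absurd hR h2R
        · exact h
      have hqR : q + 1 ∉ Rset f := fun h => R_not_both hf h (by rwa [show q + 1 + 1 = q + 2 from rfl])
      have hhq : tailF (dB f) q = f (q + 1) + 1 := by
        rw [hTval q (by omega)]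
        simp [hqR, hR]
      by_cases hq0 : tailF (dB f) (q - 1) = 0
      · exact L_base hT (by rw [hhq]; omega) hq0
      · have hq2 : 2 ≤ q := by
          rcases Nat.lt_or_ge q 2 with h | h
          · interval_cases q
            · exact absurd (by simp [tailF] : tailF (dB f) 0 = 0) hq0
          · exact h
        have hfq : f q ≠ 0 := by
          intro h0
          apply hq0
          rw [hTval (q - 1) (by omega), show q - 1 + 1 = q by omega,
            show q - 1 + 2 = q + 1 by omega]
          have h2 : q ∉ Rset f := fun h => R_nonzero h h0
          simp [h0, h2, hqR]
        have hR1 : q ∈ Rset f := by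
          rcases R_pair hf hfq with h | h
          · exact h
          · exact absurd h hqR
        have hIH := (ih (q - 2) (by omega)).1 (by rw [show q - 2 + 2 = q by omega]; exact hR1)
        have hst := L_step hT (q := q - 1)
          (by rw [show q - 1 + 1 = q by omega, hhq]; omega) hq0
        rw [show q - 1 + 1 = q by omega, show q - 1 - 1 = q - 2 by omega] at hst
        exact hst.mpr hIH
    · intro hR
      by_cases hq : tailF (dB f) q = 0
      · exact fun h => L_nonzero h hq
      have hq1 : 1 ≤ q := by
        rcases Nat.eq_zero_or_pos q with h | h
        · exact absurd (by simp [tailF, h] : tailF (dB f) q = 0) hq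
        · exact h
      have hfq : f (q + 1) ≠ 0 := by
        intro h0
        apply hq
        rw [hTval q (by omega)]
        have h2 : q + 1 ∉ Rset f := fun h => R_nonzero h h0
        simp [h0, h2, hR]
      have hqR : q + 1 ∈ Rset f := by
        rcases R_pair hf hfq with h | h
        · exact h
        · rw [show q + 1 + 1 = q + 2 from rfl] at h; exact absurd h hR
      have hq2 : 2 ≤ q := by
        rcases Nat.lt_or_ge q 2 with h | h
        · interval_cases q
          · exact absurd hqR h2R
        · exact h
      have hq0 : tailF (dB f) (q - 1) ≠ 0 := by
        rw [hTval (q - 1) (by omega), show q - 1 + 1 = q by omega,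
          show q - 1 + 2 = q + 1 by omega]
        simp only [hqR, if_pos]
        omega
      have hIH := (ih (q - 2) (by omega)).2 (by
        rw [show q - 2 + 2 = q by omega]
        intro h
        exact (R_not_both hf h) hqR)
      have hst := L_step hT (q := q - 1)
        (by rw [show q - 1 + 1 = q by omega]; exact hq) hq0
      rw [show q - 1 + 1 = q by omega, show q - 1 - 1 = q - 2 by omega] at hst
      exact fun h => hIH (hst.mp h)

end Burge2
/-- `∂` is two-to-one, restricting to a bijection from
`A = {f : 1 ∉ R(f)}` onto `F` with inverse `α`, and from `B = {f : 1 ∈ R(f)}`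
onto `F` with inverse `β`. -/
theorem stmt2 :
    (∀ f : ℕ → ℕ, IsFreq f → IsFreq (dB f)) ∧
    (∀ f : ℕ → ℕ, IsFreq f → IsFreq (aB f) ∧ 1 ∉ Rset (aB f) ∧ dB (aB f) = f) ∧
    (∀ f : ℕ → ℕ, IsFreq f → IsFreq (bB f) ∧ 1 ∈ Rset (bB f) ∧ dB (bB f) = f) ∧
    (∀ f : ℕ → ℕ, IsFreq f → 1 ∉ Rset f → aB (dB f) = f) ∧
    (∀ f : ℕ → ℕ, IsFreq f → 1 ∈ Rset f → bB (dB f) = f) := by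
  open Burge2 in
  refine ⟨fun f hf => IsFreq_dB hf, ?_, ?_, ?_, ?_⟩
  · -- α part : IsFreq (aB f), 1 ∉ Rset (aB f), dB (aB f) = f
    intro f hf
    have hM := M1 hf
    have e_iff : ∀ n, ((n + 1 ∈ Rset (aB f)) ↔ (n ∈ Lset f)) := fun n =>
      ⟨fun h => Classical.byContradiction fun hc => (hM n).2 hc h, (hM n).1⟩
    refine ⟨IsFreq_aB hf, ?_, ?_⟩
    · simpa using (hM 0).2 (fun h => L_nonzero h hf.1)
    · funext n
      by_cases hn : n = 0
      · rw [hn]; simp [dB, hf.1]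
      · have e1 : (n ∈ Rset (aB f)) ↔ (n - 1 ∈ Lset f) := by
          have := e_iff (n - 1); rwa [show n - 1 + 1 = n by omega] at this
        have e2 := e_iff n
        rw [dB_val (aB f) hn, aB_val f hn, if_congr e1 rfl rfl, if_congr e2 rfl rfl]
        have hx : (if n ∈ Lset f then 1 else 0) ≤ f n := by
          split
          · exact Nat.one_le_iff_ne_zero.mpr (L_nonzero ‹_›)
          · omega
        omega
  · -- β part
    intro f hf
    have ht : IsFreq (tailF f) := IsFreq_tail hf
    have hg : IsFreq (aB (tailF f)) := IsFreq_aB ht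
    have hfb : IsFreq (bB f) := IsFreq_bB hf
    have hMt := M1 ht
    have et_iff : ∀ n, ((n + 1 ∈ Rset (aB (tailF f))) ↔ (n ∈ Lset (tailF f))) := fun n =>
      ⟨fun h => Classical.byContradiction fun hc => (hMt n).2 hc h, (hMt n).1⟩
    have valB : ∀ m, m ≠ 0 → bB f (m + 1) = aB (tailF f) m := by
      intro m hm
      simp [bB, show m + 1 ≠ 0 by omega, show m + 1 ≠ 1 by omega, hm]
    have dzshift : ∀ q, q ≠ 0 → dzF (bB f) (q + 1) = dzF (aB (tailF f)) q := by
      intro q hq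
      unfold dzF
      congr 1
      ext t
      simp only [Set.mem_setOf_eq]
      rw [show q + 1 + t = (q + t) + 1 by omega, valB (q + t) (by omega)]
    have shiftR : ∀ q, q ≠ 0 → ((q + 1 ∈ Rset (bB f)) ↔ (q ∈ Rset (aB (tailF f)))) := by
      intro q hq
      rw [R_mem_iff hfb, R_mem_iff hg, dzshift q hq, valB q hq]
    have hb1 : bB f 1 = f 1 + 1 := by simp [bB]
    have h1g : 1 ∉ Rset (aB (tailF f)) := by
      simpa using (hMt 0).2 (fun h => L_nonzero h ht.1)
    have hone : 1 ∈ Rset (bB f) := by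
      by_cases hg1 : aB (tailF f) 1 = 0
      · exact R_base hfb (by rw [hb1]; omega)
          (by rw [valB 1 one_ne_zero]; exact hg1)
      · have hdz : dzF (aB (tailF f)) 1 % 2 = 0 := by
          rw [R_mem_iff hg] at h1g
          rcases Nat.mod_two_eq_zero_or_one (dzF (aB (tailF f)) 1) with h | h
          · exact h
          · exact absurd ⟨hg1, h⟩ h1g
        have hdz1 : dzF (bB f) 1 = dzF (aB (tailF f)) 1 + 1 := by
          rw [dz_succ hfb (show bB f 1 ≠ 0 by rw [hb1]; omega), dzshift 1 one_ne_zero]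
        rw [R_mem_iff hfb]
        exact ⟨by rw [hb1]; omega, by omega⟩
    refine ⟨hfb, hone, ?_⟩
    funext n
    by_cases hn0 : n = 0
    · rw [hn0]; simp [dB, hf.1]
    by_cases hn1 : n = 1
    · subst hn1
      rw [dB_val (bB f) one_ne_zero, hb1, if_pos hone]
      have h2 : (1 : ℕ) + 1 ∉ Rset (bB f) := by
        rw [shiftR 1 one_ne_zero]
        exact h1g
      rw [if_neg h2]
      omega
    · have hn2 : 2 ≤ n := by omega
      rw [dB_val (bB f) hn0]
      have hbn : bB f n = aB (tailF f) (n - 1) := by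
        have := valB (n - 1) (show n - 1 ≠ 0 by omega)
        rwa [show n - 1 + 1 = n by omega] at this
      have e1 : (n ∈ Rset (bB f)) ↔ (n - 2 ∈ Lset (tailF f)) := by
        have h1 := shiftR (n - 1) (show n - 1 ≠ 0 by omega)
        rw [show n - 1 + 1 = n by omega] at h1
        have h2 := et_iff (n - 2)
        rw [show n - 2 + 1 = n - 1 by omega] at h2
        exact h1.trans h2
      have e2 : (n + 1 ∈ Rset (bB f)) ↔ (n - 1 ∈ Lset (tailF f)) := by
        have h1 := shiftR n hn0
        have h2 := et_iff (n - 1)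
        rw [show n - 1 + 1 = n by omega] at h2
        exact h1.trans h2
      rw [hbn, aB_val (tailF f) (show n - 1 ≠ 0 by omega),
        if_congr e1 rfl rfl, if_congr e2 rfl rfl,
        show n - 1 - 1 = n - 2 by omega,
        show tailF f (n - 1) = f n by
          simp [tailF, show n - 1 ≠ 0 by omega, show n - 1 + 1 = n by omega]]
      have hx : (if n - 1 ∈ Lset (tailF f) then 1 else 0) ≤ f n := by
        split
        · have h0 := L_nonzero ‹n - 1 ∈ Lset (tailF f)›
          simp only [tailF, if_neg (show n - 1 ≠ 0 by omega),
            show n - 1 + 1 = n by omega] at h0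
          omega
        · omega
      omega
  · -- α ∘ ∂ = id on A
    intro f hf h1R
    have hM := M2 hf h1R
    have e_iff : ∀ n, ((n ∈ Lset (dB f)) ↔ (n + 1 ∈ Rset f)) := fun n =>
      ⟨fun h => Classical.byContradiction fun hc => (hM n).2 hc h, (hM n).1⟩
    funext n
    by_cases hn : n = 0
    · rw [hn]; simp [aB, hf.1]
    · have e1 := e_iff n
      have e2 : (n - 1 ∈ Lset (dB f)) ↔ (n ∈ Rset f) := by
        have := e_iff (n - 1); rwa [show n - 1 + 1 = n by omega] at this
      rw [aB_val (dB f) hn, dB_val f hn, if_congr e1 rfl rfl, if_congr e2 rfl rfl]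
      have hx : (if n ∈ Rset f then 1 else 0) ≤ f n := by
        split
        · exact Nat.one_le_iff_ne_zero.mpr (R_nonzero ‹_›)
        · omega
      omega
  · -- β ∘ ∂ = id on B
    intro f hf h1R
    have hM := M3 hf h1R
    have e_iff : ∀ n, ((n ∈ Lset (tailF (dB f))) ↔ (n + 2 ∈ Rset f)) := fun n =>
      ⟨fun h => Classical.byContradiction fun hc => (hM n).2 hc h, (hM n).1⟩
    have h2R : (2 : ℕ) ∉ Rset f := by simpa using R_not_both hf h1R
    have hf1 : f 1 ≠ 0 := R_nonzero h1R
    funext n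
    by_cases hn0 : n = 0
    · rw [hn0]; simp [bB, hf.1]
    by_cases hn1 : n = 1
    · subst hn1
      rw [show bB (dB f) 1 = dB f 1 + 1 by simp [bB], dB_val f one_ne_zero,
        if_pos h1R, show (1 : ℕ) + 1 = 2 from rfl, if_neg h2R]
      omega
    · have hn2 : 2 ≤ n := by omega
      rw [show bB (dB f) n = aB (tailF (dB f)) (n - 1) by simp [bB, hn0, hn1],
        aB_val (tailF (dB f)) (show n - 1 ≠ 0 by omega),
        show n - 1 - 1 = n - 2 by omega]
      have e1 : (n - 1 ∈ Lset (tailF (dB f))) ↔ (n + 1 ∈ Rset f) := by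
        have := e_iff (n - 1); rwa [show n - 1 + 2 = n + 1 by omega] at this
      have e2 : (n - 2 ∈ Lset (tailF (dB f))) ↔ (n ∈ Rset f) := by
        have := e_iff (n - 2); rwa [show n - 2 + 2 = n by omega] at this
      rw [show tailF (dB f) (n - 1) = dB f n by
          simp [tailF, show n - 1 ≠ 0 by omega, show n - 1 + 1 = n by omega],
        dB_val f hn0, if_congr e1 rfl rfl, if_congr e2 rfl rfl]
      have hx : (if n ∈ Rset f then 1 else 0) ≤ f n := by
        split
        · exact Nat.one_le_iff_ne_zero.mpr (R_nonzero ‹_›)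
        · omega
      omega
end

section
/- For every f ∈ F and every i ≥ 1, i ∈ L(f) if and only if i+1 ∈ R(α(f)). Consequently α maps F into A = {g : 1 ∉ R(g)} and β maps F into B = {g : 1 ∈ R(g)}. -/
open scoped Classical

namespace Stmt3Aux

open scoped Classical

/-- minimal `k` with `f (q + k + 1) = 0` (right run length from `q+1`). -/
noncomputable def eF (f : ℕ → ℕ) (q : ℕ) : ℕ := sInf {k | f (q + k + 1) = 0}

/-- minimal `k` with `f (q - (k+1)) = 0` (left run length). -/
noncomputable def mF (f : ℕ → ℕ) (q : ℕ) : ℕ := sInf {k | f (q - (k + 1)) = 0}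

lemma sInf_eq_of {S : Set ℕ} {n : ℕ} (h1 : n ∈ S) (h2 : ∀ m < n, m ∉ S) : sInf S = n :=
  le_antisymm (Nat.sInf_le h1) (le_of_not_gt fun h => h2 _ h (Nat.sInf_mem ⟨n, h1⟩))

variable {f : ℕ → ℕ}

lemma mF_nonempty (h0 : f 0 = 0) (q : ℕ) : {k | f (q - (k + 1)) = 0}.Nonempty :=
  ⟨q, by simpa [Nat.sub_eq_zero_of_le (Nat.le_succ q)] using h0⟩

lemma mF_spec (h0 : f 0 = 0) (q : ℕ) : f (q - (mF f q + 1)) = 0 :=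
  Nat.sInf_mem (mF_nonempty h0 q)

lemma mF_lt {q j : ℕ} (hj : j < mF f q) : f (q - (j + 1)) ≠ 0 :=
  Nat.notMem_of_lt_sInf (s := {k | f (q - (k + 1)) = 0}) hj

lemma mF_le (h0 : f 0 = 0) {q : ℕ} (hq : 1 ≤ q) : mF f q ≤ q - 1 := by
  apply Nat.sInf_le
  have : q - (q - 1 + 1) = 0 := by omega
  simp [Set.mem_setOf_eq, this, h0]

lemma eF_spec (hv : ∀ q, ∃ k, f (q + k + 1) = 0) (q : ℕ) : f (q + eF f q + 1) = 0 :=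
  Nat.sInf_mem (hv q)

lemma eF_lt {q j : ℕ} (hj : j < eF f q) : f (q + j + 1) ≠ 0 :=
  Nat.notMem_of_lt_sInf (s := {k | f (q + k + 1) = 0}) hj

lemma eF_eq_zero {q : ℕ} (h : f (q + 1) = 0) : eF f q = 0 :=
  sInf_eq_of (by simpa using h) (by omega)

lemma eF_succ (hv : ∀ q, ∃ k, f (q + k + 1) = 0) {q : ℕ} (hf1 : f (q + 1) ≠ 0) :
    eF f q = eF f (q + 1) + 1 := by
  apply sInf_eq_of
  · have := eF_spec hv (q + 1)
    have e : q + (eF f (q + 1) + 1) + 1 = q + 1 + eF f (q + 1) + 1 := by omega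
    simpa [Set.mem_setOf_eq, e] using this
  · intro m hm hmem
    rcases m with _ | c
    · exact hf1 (by simpa using hmem)
    · have e : q + (c + 1) + 1 = q + 1 + c + 1 := by omega
      rw [Set.mem_setOf_eq, e] at hmem
      exact eF_lt (f := f) (q := q + 1) (by omega) hmem

lemma mF_succ_zero {q : ℕ} (h : f q = 0) : mF f (q + 1) = 0 :=
  sInf_eq_of (by simpa using h) (by omega)

lemma mF_succ (h0 : f 0 = 0) {q : ℕ} (hq : f q ≠ 0) : mF f (q + 1) = mF f q + 1 := by
  apply sInf_eq_of
  · have := mF_spec h0 q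
    have e : q + 1 - (mF f q + 1 + 1) = q - (mF f q + 1) := by omega
    simpa [Set.mem_setOf_eq, e] using this
  · intro m hm hmem
    rcases m with _ | c
    · exact hq (by simpa using hmem)
    · have e : q + 1 - (c + 1 + 1) = q - (c + 1) := by omega
      rw [Set.mem_setOf_eq, e] at hmem
      exact mF_lt (f := f) (q := q) (by omega) hmem

lemma spread_mF_eF (h0 : f 0 = 0) {i j q : ℕ} (hsp : IsSpread f i j)
    (hiq : i ≤ q) (hqj : q ≤ j) : mF f q = q - i ∧ eF f q = j - q := by
  obtain ⟨h1i, hij, hnz, hleft, hright⟩ := hsp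
  constructor
  · apply sInf_eq_of
    · have e : q - (q - i + 1) = i - 1 := by omega
      rw [Set.mem_setOf_eq, e]
      rcases hleft with h | h
      · simpa [h] using h0
      · exact h
    · intro m hm hmem
      exact hnz _ (by omega) (by omega) hmem
  · apply sInf_eq_of
    · have e : q + (j - q) + 1 = j + 1 := by omega
      rw [Set.mem_setOf_eq, e]; exact hright
    · intro m hm hmem
      exact hnz _ (by omega) (by omega) hmem

lemma spread_around (h0 : f 0 = 0) (hv : ∀ q, ∃ k, f (q + k + 1) = 0) {q : ℕ}
    (hq1 : 1 ≤ q) (hfq : f q ≠ 0) : IsSpread f (q - mF f q) (q + eF f q) := by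
  have hle := mF_le h0 hq1
  refine ⟨by omega, by omega, ?_, Or.inr ?_, ?_⟩
  · intro k hk1 hk2
    rcases le_or_gt k q with h | h
    · rcases Nat.eq_or_lt_of_le h with rfl | h'
      · exact hfq
      · have e : q - (q - k - 1 + 1) = k := by omega
        have := mF_lt (f := f) (q := q) (j := q - k - 1) (by omega)
        rwa [e] at this
    · have e : q + (k - q - 1) + 1 = k := by omega
      have := eF_lt (f := f) (q := q) (j := k - q - 1) (by omega)
      rwa [e] at this
  · have e : q - mF f q - 1 = q - (mF f q + 1) := by omega
    rw [e]; exact mF_spec h0 q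
  · exact eF_spec hv q

lemma mem_L_iff (h0 : f 0 = 0) (hv : ∀ q, ∃ k, f (q + k + 1) = 0) (q : ℕ) :
    q ∈ Lset f ↔ 1 ≤ q ∧ f q ≠ 0 ∧ mF f q % 2 = 0 := by
  constructor
  · rintro ⟨i, j, hsp, hiq, hqj, hpar⟩
    have hm := (spread_mF_eF h0 hsp hiq hqj).1
    exact ⟨le_trans hsp.1 hiq, hsp.2.2.1 q hiq hqj, by rw [hm]; exact hpar⟩
  · rintro ⟨hq1, hfq, hpar⟩
    refine ⟨q - mF f q, q + eF f q, spread_around h0 hv hq1 hfq, by omega, by omega, ?_⟩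
    have hle := mF_le h0 hq1
    have e : q - (q - mF f q) = mF f q := by omega
    rw [e]; exact hpar

lemma mem_R_iff (h0 : f 0 = 0) (hv : ∀ q, ∃ k, f (q + k + 1) = 0) (q : ℕ) :
    q ∈ Rset f ↔ 1 ≤ q ∧ f q ≠ 0 ∧ eF f q % 2 = 0 := by
  constructor
  · rintro ⟨i, j, hsp, hiq, hqj, hpar⟩
    have hm := (spread_mF_eF h0 hsp hiq hqj).2
    exact ⟨le_trans hsp.1 hiq, hsp.2.2.1 q hiq hqj, by rw [hm]; exact hpar⟩
  · rintro ⟨hq1, hfq, hpar⟩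
    refine ⟨q - mF f q, q + eF f q, spread_around h0 hv hq1 hfq, by omega, by omega, ?_⟩
    have e : q + eF f q - q = eF f q := by omega
    rw [e]; exact hpar

lemma not_mem_L_of_zero {n : ℕ} (h : f n = 0) : n ∉ Lset f := by
  rintro ⟨i, j, hsp, hiq, hqj, -⟩
  exact hsp.2.2.1 n hiq hqj h

lemma zero_not_mem_L : (0 : ℕ) ∉ Lset f := by
  rintro ⟨i, j, hsp, hiq, -⟩
  have := hsp.1
  omega

lemma gap (h0 : f 0 = 0) {n : ℕ} (hn : n ∈ Lset f) : n + 1 ∉ Lset f := by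
  intro hn1
  obtain ⟨i, j, hsp, hiq, hqj, hpar⟩ := hn
  have hm := (spread_mF_eF h0 hsp hiq hqj).1
  have hfn : f n ≠ 0 := hsp.2.2.1 n hiq hqj
  obtain ⟨i', j', hsp', hiq', hqj', hpar'⟩ := hn1
  have hm' := (spread_mF_eF h0 hsp' hiq' hqj').1
  have := mF_succ h0 hfn
  omega

lemma aB_succ_of_mem (h0 : f 0 = 0) {n : ℕ} (hn : n ∈ Lset f) :
    aB f (n + 1) = f (n + 1) + 1 := by
  have h1 : n + 1 ∉ Lset f := gap h0 hn
  simp [aB, h1, hn]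

lemma aB_succ_of_not_mem {n : ℕ} (hn : n ∉ Lset f) :
    aB f (n + 1) = f (n + 1) - (if n + 1 ∈ Lset f then 1 else 0) := by
  simp [aB, hn]

lemma aB_zero_beyond {N : ℕ} (hN : ∀ n, N ≤ n → f n = 0) :
    ∀ n, N + 1 ≤ n → aB f n = 0 := by
  intro n hn
  have h1 : f n = 0 := hN n (by omega)
  have h2 : n ∉ Lset f := not_mem_L_of_zero h1
  have h3 : n - 1 ∉ Lset f := not_mem_L_of_zero (hN _ (by omega))
  have h4 : n ≠ 0 := by omega
  simp [aB, h4, h2, h3, h1]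

lemma key (h0 : f 0 = 0) (N : ℕ) (hN : ∀ n, N ≤ n → f n = 0) :
    ∀ n, 1 ≤ n → (n ∈ Lset f ↔ (aB f (n + 1) ≠ 0 ∧ eF (aB f) (n + 1) % 2 = 0)) := by
  have hv : ∀ q, ∃ k, f (q + k + 1) = 0 := fun q => ⟨N, hN _ (by omega)⟩
  set g := aB f with hg
  have hgN : ∀ n, N + 1 ≤ n → g n = 0 := aB_zero_beyond hN
  have hvg : ∀ q, ∃ k, g (q + k + 1) = 0 := fun q => ⟨N + 1, hgN _ (by omega)⟩
  have base : ∀ n, N ≤ n → n ∉ Lset f ∧ g (n + 1) = 0 := fun n hn =>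
    ⟨not_mem_L_of_zero (hN n hn), hgN _ (by omega)⟩
  suffices H : ∀ d n, 1 ≤ n → N ≤ n + d →
      (n ∈ Lset f ↔ (g (n + 1) ≠ 0 ∧ eF g (n + 1) % 2 = 0)) by
    intro n h1; exact H N n h1 (by omega)
  intro d
  induction d with
  | zero =>
    intro n h1 hNn
    obtain ⟨hL, hz⟩ := base n (by omega)
    simp [hL, hz]
  | succ d ih =>
    intro n h1 hNn
    by_cases hcase : N ≤ n
    · obtain ⟨hL, hz⟩ := base n hcase
      simp [hL, hz]
    · have IH := ih (n + 1) (by omega) (by omega)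
      by_cases hnL : n ∈ Lset f
      · have hg1 : g (n + 1) = f (n + 1) + 1 := aB_succ_of_mem h0 hnL
        refine iff_of_true hnL ⟨by simp [hg1], ?_⟩
        by_cases hz : g (n + 1 + 1) = 0
        · rw [eF_eq_zero hz]
        · have hn1L : n + 1 ∉ Lset f := gap h0 hnL
          have hodd : eF g (n + 1 + 1) % 2 = 1 := by
            have hne := (not_iff_not.mpr IH).mp hn1L
            by_contra hc
            exact hne ⟨hz, by omega⟩
          rw [eF_succ hvg hz]
          omega
      · refine iff_of_false hnL ?_
        rintro ⟨hg1, hpar⟩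
        have hf1 : f (n + 1) ≠ 0 := by
          intro h
          apply hg1
          rw [hg, aB_succ_of_not_mem hnL, h]
          exact Nat.zero_sub _
        have hn1L : n + 1 ∈ Lset f := by
          rw [mem_L_iff h0 hv]
          refine ⟨by omega, hf1, ?_⟩
          by_cases hfn : f n = 0
          · rw [mF_succ_zero hfn]
          · have hodd : mF f n % 2 = 1 := by
              have hne := (not_iff_not.mpr (mem_L_iff h0 hv n)).mp hnL
              by_contra hc
              exact hne ⟨h1, hfn, by omega⟩
            rw [mF_succ h0 hfn]
            omega
        obtain ⟨hgz, hev⟩ := IH.mp hn1L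
        rw [eF_succ hvg hgz] at hpar
        omega

lemma aB_zero (f : ℕ → ℕ) : aB f 0 = 0 := by simp [aB]

lemma mF_one (h0 : f 0 = 0) : mF f 1 = 0 :=
  sInf_eq_of (by simpa using h0) (by omega)

lemma one_mem_L (h0 : f 0 = 0) (hv : ∀ q, ∃ k, f (q + k + 1) = 0) (hf1 : f 1 ≠ 0) :
    1 ∈ Lset f := by
  rw [mem_L_iff h0 hv]
  exact ⟨le_rfl, hf1, by rw [mF_one h0]⟩

/-- If `αf` is nonzero at 1, then the right run of `αf` from 1 has odd length. -/
lemma eF_aB_one_odd (h0 : f 0 = 0) (N : ℕ) (hN : ∀ n, N ≤ n → f n = 0)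
    (hg1 : aB f 1 ≠ 0) : eF (aB f) 1 % 2 = 1 := by
  have hv : ∀ q, ∃ k, f (q + k + 1) = 0 := fun q => ⟨N, hN _ (by omega)⟩
  have hvg : ∀ q, ∃ k, aB f (q + k + 1) = 0 :=
    fun q => ⟨N + 1, aB_zero_beyond hN _ (by omega)⟩
  have hf1 : f 1 ≠ 0 := by
    intro h
    apply hg1
    have h0L : (0 : ℕ) ∉ Lset f := zero_not_mem_L
    have := aB_succ_of_not_mem (f := f) (n := 0) h0L
    rw [show (0:ℕ)+1 = 1 from rfl] at this
    rw [this, h]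
    exact Nat.zero_sub _
  have h1L : 1 ∈ Lset f := one_mem_L h0 hv hf1
  obtain ⟨hg2, hev⟩ := (key h0 N hN 1 le_rfl).mp h1L
  rw [eF_succ hvg hg2]
  omega

end Stmt3Aux

/-- for every `i ≥ 1`, `i ∈ L(f)` iff `i+1 ∈ R(α(f))`; consequently
`α` maps into `A` and `β` maps into `B`. -/
theorem stmt3 (f : ℕ → ℕ) (hf : IsFreq f) :
    (∀ i, 1 ≤ i → (i ∈ Lset f ↔ i + 1 ∈ Rset (aB f))) ∧
    1 ∉ Rset (aB f) ∧ 1 ∈ Rset (bB f) := by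
  classical
  open Stmt3Aux in
  obtain ⟨h0, hsupp⟩ := hf
  obtain ⟨N, hN⟩ : ∃ N, ∀ n, N ≤ n → f n = 0 := by
    obtain ⟨N, hNb⟩ := hsupp.bddAbove
    refine ⟨N + 1, fun n hn => ?_⟩
    by_contra h
    have := hNb (Function.mem_support.mpr h)
    omega
  have hv : ∀ q, ∃ k, f (q + k + 1) = 0 := fun q => ⟨N, hN _ (by omega)⟩
  have hvg : ∀ q, ∃ k, aB f (q + k + 1) = 0 :=
    fun q => ⟨N + 1, aB_zero_beyond hN _ (by omega)⟩
  have hg0 : aB f 0 = 0 := aB_zero f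
  refine ⟨?_, ?_, ?_⟩
  · -- main equivalence
    intro i hi
    rw [key h0 N hN i hi, mem_R_iff hg0 hvg]
    constructor
    · rintro ⟨a, b⟩; exact ⟨by omega, a, b⟩
    · rintro ⟨-, a, b⟩; exact ⟨a, b⟩
  · -- 1 ∉ Rset (aB f)
    intro hmem
    rw [mem_R_iff hg0 hvg] at hmem
    obtain ⟨-, hg1, hpar⟩ := hmem
    have := eF_aB_one_odd h0 N hN hg1
    omega
  · -- 1 ∈ Rset (bB f)
    set f' := tailF f with hf'
    have h0' : f' 0 = 0 := by simp [hf', tailF]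
    have hN' : ∀ n, N ≤ n → f' n = 0 := by
      intro n hn
      rcases Nat.eq_zero_or_pos n with rfl | hp
      · exact h0'
      · simp only [hf', tailF, if_neg (by omega : n ≠ 0)]
        exact hN _ (by omega)
    set g' := aB f' with hg'
    have hvg' : ∀ q, ∃ k, g' (q + k + 1) = 0 :=
      fun q => ⟨N + 1, aB_zero_beyond hN' _ (by omega)⟩
    set h := bB f with hh
    have hB0 : h 0 = 0 := by simp [hh, bB]
    have hB2 : ∀ k, h (k + 2) = g' (k + 1) := by
      intro k
      simp only [hh, bB, if_neg (by omega : k + 2 ≠ 0), if_neg (by omega : k + 2 ≠ 1)]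
      rfl
    have hBv : ∀ q, ∃ k, h (q + k + 1) = 0 := by
      intro q
      refine ⟨N + 2, ?_⟩
      have e : q + (N + 2) + 1 = (q + N + 1) + 2 := by omega
      rw [e, hB2]
      exact aB_zero_beyond hN' _ (by omega)
    rw [mem_R_iff hB0 hBv]
    refine ⟨le_rfl, by simp [hh, bB], ?_⟩
    have hset : eF h 1 = eF g' 0 := by
      unfold eF
      congr 1
      ext k
      have e : 1 + k + 1 = k + 2 := by omega
      simp only [Set.mem_setOf_eq, e, hB2, Nat.zero_add]
    rw [hset]
    by_cases hz : g' 1 = 0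
    · rw [eF_eq_zero (q := 0) (by simpa using hz)]
    · have hodd : eF g' 1 % 2 = 1 := eF_aB_one_odd h0' N hN' hz
      rw [eF_succ hvg' (q := 0) (by simpa using hz)]
      show (eF g' 1 + 1) % 2 = 0
      omega
end

section
/- For any f ∈ F, |∂f| = |f| − μ₂(f), where |f| = Σ i·f_i and μ₂(f) is the 2-measure (the cardinality of R(f)). -/
open scoped Classical

lemma mem_Rset_pos_ne (f : ℕ → ℕ) {m : ℕ} (hm : m ∈ Rset f) : 1 ≤ m ∧ f m ≠ 0 := by
  obtain ⟨i, j, ⟨h1, hij, hk, _, _⟩, hiq, hqj, _⟩ := hm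
  exact ⟨le_trans h1 hiq, hk m hiq hqj⟩

/-- `|∂f| = |f| - μ₂(f)`, where `μ₂(f) = |R(f)|`. -/
theorem stmt6 (f : ℕ → ℕ) (hf : IsFreq f) :
    fsize (dB f) = fsize f - mu2 f := by
  classical
  obtain ⟨hf0, hfin⟩ := hf
  set N := hfin.toFinset.sup id + 1 with hNdef
  have hzero : ∀ n, N ≤ n → f n = 0 := by
    intro n hn
    by_contra h
    have hmem : n ∈ hfin.toFinset := hfin.mem_toFinset.2 h
    have := Finset.le_sup (f := id) hmem
    simp only [id] at this
    omega
  have hRlt : ∀ n ∈ Rset f, n < N := by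
    intro n hn
    have h2 := (mem_Rset_pos_ne f hn).2
    by_contra h
    exact h2 (hzero n (by omega))
  have hR0 : (0 : ℕ) ∉ Rset f := fun h => by
    have := (mem_Rset_pos_ne f h).1; omega
  -- finsum to finset sums
  have hsize : fsize f = ∑ n ∈ Finset.range N, n * f n := by
    apply finsum_eq_sum_of_support_subset
    intro n hn
    have : f n ≠ 0 := by
      intro h; apply hn; simp [h]
    simp only [Finset.coe_range, Set.mem_Iio]
    by_contra h
    exact this (hzero n (by omega))
  have hsized : fsize (dB f) = ∑ n ∈ Finset.range N, n * dB f n := by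
    apply finsum_eq_sum_of_support_subset
    intro n hn
    simp only [Finset.coe_range, Set.mem_Iio]
    by_contra h
    push_neg at h
    apply hn
    have hn0 : n ≠ 0 := by omega
    have h1 : n ∉ Rset f := fun hm => by have := hRlt n hm; omega
    have h2 : n + 1 ∉ Rset f := fun hm => by have := hRlt _ hm; omega
    simp [dB, hn0, h1, h2, hzero n (by omega)]
  have hmu : mu2 f = ((Finset.range N).filter (· ∈ Rset f)).card := by
    have : Rset f = ↑((Finset.range N).filter (· ∈ Rset f)) := by
      ext n
      simp only [Finset.coe_filter, Finset.mem_range, Set.mem_setOf_eq]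
      exact ⟨fun h => ⟨hRlt n h, h⟩, fun h => h.2⟩
    rw [mu2]
    conv_lhs => rw [this]
    exact Set.ncard_coe_finset _
  -- the integer-valued indicator of Rset
  set r : ℕ → ℤ := fun n => if n ∈ Rset f then 1 else 0 with hrdef
  have hr0 : r 0 = 0 := by simp [hrdef, hR0]
  have hrN : r N = 0 := by
    have : N ∉ Rset f := fun h => by have := hRlt N h; omega
    simp [hrdef, this]
  have key : ∀ n : ℕ, (n : ℤ) * dB f n + r n - (n : ℤ) * f n
      = ((n : ℤ) + 1 - 1) * r (n + 1) - ((n : ℤ) - 1) * r n := by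
    intro n
    rcases Nat.eq_zero_or_pos n with h0 | h0
    · subst h0; simp [dB, hr0]
    have hn0 : n ≠ 0 := by omega
    by_cases h1 : n ∈ Rset f <;> by_cases h2 : n + 1 ∈ Rset f
    · have hfn : 1 ≤ f n := Nat.one_le_iff_ne_zero.2 (mem_Rset_pos_ne f h1).2
      simp only [dB, hrdef, if_neg hn0, if_pos h1, if_pos h2]
      push_cast [Nat.sub_add_cancel hfn]
      ring
    · have hfn : 1 ≤ f n := Nat.one_le_iff_ne_zero.2 (mem_Rset_pos_ne f h1).2
      simp only [dB, hrdef, if_neg hn0, if_pos h1, if_neg h2]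
      push_cast [Nat.cast_sub hfn]
      ring
    · simp only [dB, hrdef, if_neg hn0, if_neg h1, if_pos h2, Nat.sub_zero]
      push_cast
      ring
    · simp only [dB, hrdef, if_neg hn0, if_neg h1, if_neg h2, Nat.sub_zero]
      push_cast
      ring
  have tele : ∑ n ∈ Finset.range N,
      ((n : ℤ) * dB f n + r n - (n : ℤ) * f n) = 0 := by
    have := Finset.sum_range_sub (f := fun m => ((m : ℤ) - 1) * r m) N
    calc ∑ n ∈ Finset.range N, ((n : ℤ) * dB f n + r n - (n : ℤ) * f n)
        = ∑ n ∈ Finset.range N,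
            (((((n : ℕ) + 1 : ℕ) : ℤ) - 1) * r (n + 1) - ((n : ℤ) - 1) * r n) := by
          refine Finset.sum_congr rfl fun n _ => ?_
          rw [key n]; push_cast; ring
      _ = ((N : ℤ) - 1) * r N - ((0 : ℤ) - 1) * r 0 := this
      _ = 0 := by rw [hrN, hr0]; ring
  have hsum : (∑ n ∈ Finset.range N, (n : ℤ) * dB f n) + ∑ n ∈ Finset.range N, r n
      = ∑ n ∈ Finset.range N, (n : ℤ) * f n := by
    have := tele
    rw [Finset.sum_sub_distrib, Finset.sum_add_distrib] at this
    linarith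
  have hrsum : ∑ n ∈ Finset.range N, r n
      = (((Finset.range N).filter (· ∈ Rset f)).card : ℤ) := by
    rw [hrdef]
    simp [Finset.sum_boole]
  have main : fsize (dB f) + mu2 f = fsize f := by
    have : ((fsize (dB f) : ℤ)) + (mu2 f : ℤ) = (fsize f : ℤ) := by
      rw [hsize, hsized, hmu, ← hrsum]
      push_cast
      exact hsum
    exact_mod_cast this
  omega
end

section
/- For any f ∈ F: μ₂(∂f) = μ₂(f) − 1 if f ∈ B and ∂f ∈ A, and μ₂(∂f) = μ₂(f) otherwise. -/
open scoped Classical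

namespace Stmt7Aux

lemma exists_bound {g : ℕ → ℕ} (hg : (Function.support g).Finite) :
    ∃ B, ∀ k, B ≤ k → g k = 0 := by
  obtain ⟨B, hB⟩ := hg.bddAbove
  refine ⟨B + 1, fun k hk => ?_⟩
  by_contra h
  exact absurd (hB (Function.mem_support.mpr h)) (by omega)

lemma exists_up {g : ℕ → ℕ} (hg : (Function.support g).Finite) (q : ℕ) :
    ∃ d, g (q + d + 1) = 0 := by
  obtain ⟨B, hB⟩ := exists_bound hg
  exact ⟨B, hB _ (by omega)⟩

noncomputable def ru {g : ℕ → ℕ} (hg : (Function.support g).Finite) (q : ℕ) : ℕ :=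
  Nat.find (exists_up hg q)

lemma ru_spec {g : ℕ → ℕ} (hg : (Function.support g).Finite) (q : ℕ) :
    g (q + ru hg q + 1) = 0 := by unfold ru; exact Nat.find_spec (exists_up hg q)

lemma ru_min {g : ℕ → ℕ} (hg : (Function.support g).Finite) {q d : ℕ}
    (hd : d < ru hg q) : g (q + d + 1) ≠ 0 := by
  unfold ru at hd; exact Nat.find_min (exists_up hg q) hd

lemma ru_le {g : ℕ → ℕ} (hg : (Function.support g).Finite) {q n : ℕ}
    (h : g (q + n + 1) = 0) : ru hg q ≤ n := by
  unfold ru; exact Nat.find_le h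

lemma ru_eq_zero {g : ℕ → ℕ} (hg : (Function.support g).Finite) {q : ℕ}
    (h : g (q + 1) = 0) : ru hg q = 0 :=
  Nat.le_zero.mp (ru_le hg (by simpa using h))

lemma exists_start {g : ℕ → ℕ} : ∀ q : ℕ, 1 ≤ q → g q ≠ 0 →
    ∃ i, 1 ≤ i ∧ i ≤ q ∧ (∀ k, i ≤ k → k ≤ q → g k ≠ 0) ∧ (i = 1 ∨ g (i - 1) = 0) := by
  intro q
  induction q with
  | zero => intro h; omega
  | succ n ih =>
    intro _ hq
    by_cases hn : n = 0
    · subst hn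
      refine ⟨1, le_refl _, le_refl _, fun k h1 h2 => ?_, Or.inl rfl⟩
      have hk1 : k = 1 := by omega
      subst hk1
      simpa using hq
    · by_cases hgn : g n = 0
      · refine ⟨n + 1, by omega, le_refl _, fun k h1 h2 => ?_, Or.inr (by simpa using hgn)⟩
        have hk : k = n + 1 := by omega
        subst hk; exact hq
      · obtain ⟨i, h1, h2, h3, h4⟩ := ih (by omega) hgn
        refine ⟨i, h1, by omega, fun k hk1 hk2 => ?_, h4⟩
        by_cases hk : k ≤ n
        · exact h3 k hk1 hk
        · have hk : k = n + 1 := by omega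
          subst hk; exact hq

lemma mem_Rset_iff {g : ℕ → ℕ} (hg : (Function.support g).Finite) (q : ℕ) :
    q ∈ Rset g ↔ 1 ≤ q ∧ g q ≠ 0 ∧ ru hg q % 2 = 0 := by
  constructor
  · rintro ⟨i, j, ⟨h1i, hij, hnz, hleft, htop⟩, hiq, hqj, hpar⟩
    have hq : g q ≠ 0 := hnz q hiq hqj
    have hru : ru hg q = j - q := by
      apply le_antisymm
      · refine ru_le hg ?_
        have e : q + (j - q) + 1 = j + 1 := by omega
        rw [e]; exact htop
      · by_contra h
        push_neg at h
        exact hnz _ (by omega) (by omega) (ru_spec hg q)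
    exact ⟨le_trans h1i hiq, hq, by rw [hru]; exact hpar⟩
  · rintro ⟨h1, hq, hpar⟩
    obtain ⟨i, hi1, hiq, hnzlow, hleft⟩ := exists_start q h1 hq
    refine ⟨i, q + ru hg q, ⟨hi1, by omega, ?_, hleft, ?_⟩, hiq, by omega, ?_⟩
    · intro k hk1 hk2
      by_cases hk : k ≤ q
      · exact hnzlow k hk1 hk
      · have hd : k - q - 1 < ru hg q := by omega
        have e : q + (k - q - 1) + 1 = k := by omega
        have := ru_min hg hd
        rwa [e] at this
    · exact ru_spec hg q
    · have e : q + ru hg q - q = ru hg q := by omega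
      rw [e]; exact hpar

lemma ru_succ {g : ℕ → ℕ} (hg : (Function.support g).Finite) (q : ℕ)
    (h : g (q + 1) ≠ 0) : ru hg q = ru hg (q + 1) + 1 := by
  apply le_antisymm
  · refine ru_le hg ?_
    have e : q + (ru hg (q + 1) + 1) + 1 = (q + 1) + ru hg (q + 1) + 1 := by omega
    rw [e]; exact ru_spec hg (q + 1)
  · by_contra hlt
    push_neg at hlt
    rcases Nat.eq_zero_or_pos (ru hg q) with h0 | hpos
    · exact h (by simpa [h0] using ru_spec hg q)
    · have hd : ru hg q - 1 < ru hg (q + 1) := by omega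
      refine ru_min hg hd ?_
      have e : (q + 1) + (ru hg q - 1) + 1 = q + ru hg q + 1 := by omega
      rw [e]; exact ru_spec hg q

lemma adj {g : ℕ → ℕ} (hg : (Function.support g).Finite) {q : ℕ}
    (h1 : 1 ≤ q) (hq : g q ≠ 0) (hq1 : g (q + 1) ≠ 0) :
    (q ∈ Rset g ↔ (q + 1) ∉ Rset g) := by
  rw [mem_Rset_iff hg, mem_Rset_iff hg, ru_succ hg q hq1]
  constructor
  · rintro ⟨-, -, hp⟩ ⟨-, -, hp'⟩; omega
  · intro h
    refine ⟨h1, hq, ?_⟩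
    by_contra hp
    exact h ⟨by omega, hq1, by omega⟩

lemma not_both {g : ℕ → ℕ} (hg : (Function.support g).Finite) {q : ℕ}
    (hA : q ∈ Rset g) (hB : (q + 1) ∈ Rset g) : False := by
  have h1 := (mem_Rset_iff hg q).mp hA
  have h2 := (mem_Rset_iff hg (q + 1)).mp hB
  exact (adj hg h1.1 h1.2.1 h2.2.1).mp hA hB

lemma mem_or_succ {g : ℕ → ℕ} (hg : (Function.support g).Finite) {q : ℕ}
    (h1 : 1 ≤ q) (hq : g q ≠ 0) : q ∈ Rset g ∨ (q + 1) ∈ Rset g := by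
  by_cases hp : ru hg q % 2 = 0
  · exact Or.inl ((mem_Rset_iff hg q).mpr ⟨h1, hq, hp⟩)
  · have hpos : 0 < ru hg q := by omega
    have hq1 : g (q + 1) ≠ 0 := by
      have := ru_min hg hpos
      simpa using this
    have := ru_succ hg q hq1
    exact Or.inr ((mem_Rset_iff hg (q + 1)).mpr ⟨by omega, hq1, by omega⟩)

lemma dB_ne_zero_iff {f : ℕ → ℕ} (hf : (Function.support f).Finite) {k : ℕ}
    (h1 : 1 ≤ k) :
    dB f k ≠ 0 ↔ ((k + 1) ∈ Rset f ∨ (k ∈ Rset f ∧ 2 ≤ f k)) := by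
  have hk0 : k ≠ 0 := by omega
  unfold dB
  rw [if_neg hk0]
  by_cases hs : (k + 1) ∈ Rset f
  · have hnk : k ∉ Rset f := fun h => not_both hf h hs
    simp [hs, hnk]
  · by_cases hk : k ∈ Rset f
    · have hfk : f k ≠ 0 := ((mem_Rset_iff hf k).mp hk).2.1
      simp only [hs, hk, if_true, if_false, iff_true, iff_false]
      simp [hs, hk]
      omega
    · have hfk : f k = 0 := by
        by_contra h
        rcases mem_or_succ hf h1 h with h' | h'
        · exact hk h'
        · exact hs h'
      simp [hs, hk, hfk]

lemma dB_support_finite {f : ℕ → ℕ} (hf : (Function.support f).Finite) :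
    (Function.support (dB f)).Finite := by
  obtain ⟨B, hB⟩ := exists_bound hf
  apply Set.Finite.subset (Set.finite_Iio (B + 1))
  intro k hk
  simp only [Function.mem_support] at hk
  by_contra h
  simp only [Set.mem_Iio, not_lt] at h
  apply hk
  unfold dB
  by_cases hk0 : k = 0
  · rw [if_pos hk0]
  · rw [if_neg hk0]
    have h1 : k ∉ Rset f := fun hm => ((mem_Rset_iff hf k).mp hm).2.1 (hB k (by omega))
    have h2 : (k + 1) ∉ Rset f :=
      fun hm => ((mem_Rset_iff hf (k + 1)).mp hm).2.1 (hB (k + 1) (by omega))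
    simp [h1, h2, hB k (by omega)]

lemma Rset_finite {g : ℕ → ℕ} (hg : (Function.support g).Finite) : (Rset g).Finite :=
  hg.subset (fun q hq => Function.mem_support.mpr ((mem_Rset_iff hg q).mp hq).2.1)

lemma lemA {f : ℕ → ℕ} (hf : (Function.support f).Finite) :
    ∀ r, r ∈ Rset f → 2 ≤ r → (r ∈ Rset (dB f) ∨ (r - 1) ∈ Rset (dB f)) := by
  obtain ⟨B, hB⟩ := exists_bound hf
  have hf' := dB_support_finite hf
  have key : ∀ n r, B ≤ r + n → r ∈ Rset f → 2 ≤ r →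
      (r ∈ Rset (dB f) ∨ (r - 1) ∈ Rset (dB f)) := by
    intro n
    induction n with
    | zero =>
      intro r hBr hr _
      exact absurd (hB r (by omega)) ((mem_Rset_iff hf r).mp hr).2.1
    | succ n ih =>
      intro r hBr hr h2
      obtain ⟨s, rfl⟩ : ∃ s, r = s + 2 := ⟨r - 2, by omega⟩
      have hnot3 : (s + 3) ∉ Rset f := by
        intro h
        exact not_both hf hr (by rw [(by omega : s + 2 + 1 = s + 3)]; exact h)
      have h1 : dB f (s + 1) ≠ 0 := by
        refine (dB_ne_zero_iff hf (by omega)).mpr (Or.inl ?_)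
        rw [(by omega : s + 1 + 1 = s + 2)]; exact hr
      by_cases hf2 : 2 ≤ f (s + 2)
      · have h2' : dB f (s + 2) ≠ 0 := (dB_ne_zero_iff hf (by omega)).mpr (Or.inr ⟨hr, hf2⟩)
        by_cases h4 : (s + 4) ∈ Rset f
        · have h3 : dB f (s + 3) ≠ 0 := by
            refine (dB_ne_zero_iff hf (by omega)).mpr (Or.inl ?_)
            rw [(by omega : s + 3 + 1 = s + 4)]; exact h4
          rcases ih (s + 4) (by omega) h4 (by omega) with hc | hc
          · have hf4 : dB f (s + 4) ≠ 0 := ((mem_Rset_iff hf' _).mp hc).2.1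
            have ha3 := adj hf' (show 1 ≤ s + 3 by omega) h3
              (by rw [(by omega : s + 3 + 1 = s + 4)]; exact hf4)
            have hn3 : (s + 3) ∉ Rset (dB f) := by
              intro hmem
              exact (ha3.mp hmem) (by rw [(by omega : s + 3 + 1 = s + 4)]; exact hc)
            have ha2 := adj hf' (show 1 ≤ s + 2 by omega) h2'
              (by rw [(by omega : s + 2 + 1 = s + 3)]; exact h3)
            refine Or.inl (ha2.mpr ?_)
            rw [(by omega : s + 2 + 1 = s + 3)]; exact hn3
          · rw [(by omega : s + 4 - 1 = s + 3)] at hc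
            have h3' : dB f (s + 3) ≠ 0 := ((mem_Rset_iff hf' _).mp hc).2.1
            have ha2 := adj hf' (show 1 ≤ s + 2 by omega) h2'
              (by rw [(by omega : s + 2 + 1 = s + 3)]; exact h3')
            have hn2 : (s + 2) ∉ Rset (dB f) := by
              intro hmem
              exact (ha2.mp hmem) (by rw [(by omega : s + 2 + 1 = s + 3)]; exact hc)
            have ha1 := adj hf' (show 1 ≤ s + 1 by omega) h1
              (by rw [(by omega : s + 1 + 1 = s + 2)]; exact h2')
            refine Or.inr ?_
            rw [(by omega : s + 2 - 1 = s + 1)]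
            refine ha1.mpr ?_
            rw [(by omega : s + 1 + 1 = s + 2)]; exact hn2
        · have h30 : dB f (s + 3) = 0 := by
            by_contra h
            rcases (dB_ne_zero_iff hf (show 1 ≤ s + 3 by omega)).mp h with h' | h'
            · rw [(by omega : s + 3 + 1 = s + 4)] at h'; exact h4 h'
            · exact hnot3 h'.1
          refine Or.inl ((mem_Rset_iff hf' _).mpr ⟨by omega, h2', ?_⟩)
          have hz : ru hf' (s + 2) = 0 := by
            refine ru_eq_zero hf' ?_
            rw [(by omega : s + 2 + 1 = s + 3)]; exact h30
          simp [hz]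
      · have h20 : dB f (s + 2) = 0 := by
          by_contra h
          rcases (dB_ne_zero_iff hf (show 1 ≤ s + 2 by omega)).mp h with h' | h'
          · rw [(by omega : s + 2 + 1 = s + 3)] at h'; exact hnot3 h'
          · exact hf2 h'.2
        refine Or.inr ?_
        rw [(by omega : s + 2 - 1 = s + 1)]
        refine (mem_Rset_iff hf' _).mpr ⟨by omega, h1, ?_⟩
        have hz : ru hf' (s + 1) = 0 := by
          refine ru_eq_zero hf' ?_
          rw [(by omega : s + 1 + 1 = s + 2)]; exact h20
        simp [hz]
  intro r hr h2
  exact key B r (by omega) hr h2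

end Stmt7Aux

/-- `μ₂(∂f) = μ₂(f) - 1` if `f ∈ B` and `∂f ∈ A`, and
`μ₂(∂f) = μ₂(f)` otherwise. -/
theorem stmt7 (f : ℕ → ℕ) (hf : IsFreq f) :
    mu2 (dB f) = if 1 ∈ Rset f ∧ 1 ∉ Rset (dB f) then mu2 f - 1 else mu2 f := by
  classical
  open Stmt7Aux in
  have hfin : (Function.support f).Finite := hf.2
  have hfin' := Stmt7Aux.dB_support_finite hfin
  have hRfin := Stmt7Aux.Rset_finite hfin
  have hR'fin := Stmt7Aux.Rset_finite hfin'
  set φ : ℕ → ℕ := fun q => if q + 1 ∈ Rset f then q + 1 else q with hφ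
  have hinj : Set.InjOn φ (Rset (dB f)) := by
    intro a ha b hb hab
    simp only [hφ] at hab
    split_ifs at hab with h1 h2 h2
    · omega
    · -- a + 1 = b, both a b ∈ Rset (dB f)
      exfalso
      have hfa := ((Stmt7Aux.mem_Rset_iff hfin' a).mp ha).2.1
      have hfb := ((Stmt7Aux.mem_Rset_iff hfin' b).mp hb).2.1
      have h1a := ((Stmt7Aux.mem_Rset_iff hfin' a).mp ha).1
      have hadj := Stmt7Aux.adj hfin' h1a hfa (by rw [hab]; exact hfb)
      exact (hadj.mp ha) (by rw [hab]; exact hb)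
    · exfalso
      have hfa := ((Stmt7Aux.mem_Rset_iff hfin' a).mp ha).2.1
      have hfb := ((Stmt7Aux.mem_Rset_iff hfin' b).mp hb).2.1
      have h1b := ((Stmt7Aux.mem_Rset_iff hfin' b).mp hb).1
      have hadj := Stmt7Aux.adj hfin' h1b hfb (by rw [← hab]; exact hfa)
      exact (hadj.mp hb) (by rw [← hab]; exact ha)
    · exact hab
  have hsub : ∀ q ∈ Rset (dB f), φ q ∈ Rset f := by
    intro q hq
    have h1q := ((Stmt7Aux.mem_Rset_iff hfin' q).mp hq).1
    have hne := ((Stmt7Aux.mem_Rset_iff hfin' q).mp hq).2.1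
    rcases (Stmt7Aux.dB_ne_zero_iff hfin h1q).mp hne with h | h
    · simp only [hφ]; rw [if_pos h]; exact h
    · have hns : q + 1 ∉ Rset f := fun hc => Stmt7Aux.not_both hfin h.1 hc
      simp only [hφ]; rw [if_neg hns]; exact h.1
  have hmem2 : ∀ r ∈ Rset f, 2 ≤ r → r ∈ φ '' (Rset (dB f)) := by
    intro r hr h2
    rcases Stmt7Aux.lemA hfin r hr h2 with h | h
    · refine ⟨r, h, ?_⟩
      have hns : r + 1 ∉ Rset f := fun hc => Stmt7Aux.not_both hfin hr hc
      simp only [hφ]; rw [if_neg hns]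
    · refine ⟨r - 1, h, ?_⟩
      have e : r - 1 + 1 = r := by omega
      simp only [hφ]
      rw [e, if_pos hr]
  have h1mem : 1 ∈ Rset f → 1 ∈ Rset (dB f) → 1 ∈ φ '' (Rset (dB f)) := by
    intro hA hB
    refine ⟨1, hB, ?_⟩
    have hns : (1 : ℕ) + 1 ∉ Rset f := fun hc => Stmt7Aux.not_both hfin hA hc
    simp only [hφ]; rw [if_neg hns]
  unfold mu2
  by_cases hc : 1 ∈ Rset f ∧ 1 ∉ Rset (dB f)
  · rw [if_pos hc]
    have himg : φ '' (Rset (dB f)) = Rset f \ {1} := by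
      apply Set.Subset.antisymm
      · rintro x ⟨q, hq, rfl⟩
        refine ⟨hsub q hq, ?_⟩
        simp only [Set.mem_singleton_iff]
        intro hx
        simp only [hφ] at hx
        split_ifs at hx with h
        · have h1q := ((Stmt7Aux.mem_Rset_iff hfin' q).mp hq).1
          omega
        · subst hx
          exact hc.2 hq
      · rintro x ⟨hx, hx1⟩
        simp only [Set.mem_singleton_iff] at hx1
        have h1x : 1 ≤ x := ((Stmt7Aux.mem_Rset_iff hfin x).mp hx).1
        exact hmem2 x hx (by omega)
    rw [← Set.ncard_image_of_injOn hinj, himg]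
    exact Set.ncard_diff_singleton_of_mem hc.1
  · rw [if_neg hc]
    have himg : φ '' (Rset (dB f)) = Rset f := by
      apply Set.Subset.antisymm
      · rintro x ⟨q, hq, rfl⟩; exact hsub q hq
      · intro x hx
        have h1x : 1 ≤ x := ((Stmt7Aux.mem_Rset_iff hfin x).mp hx).1
        by_cases h2 : 2 ≤ x
        · exact hmem2 x hx h2
        · have hx1 : x = 1 := by omega
          subst hx1
          have hB : 1 ∈ Rset (dB f) := by
            by_contra h
            exact hc ⟨hx, h⟩
          exact h1mem hx hB
    rw [← Set.ncard_image_of_injOn hinj, himg]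
end

section
/- For any f ∈ F with Burge code ω = Ω(f): (1) the length ℓ(f) equals the number of occurrences of the letter b in ω; (2) |f| equals the major index maj(ω) = Σ_{i ∈ Des(ω)} i; (3) the 2-measure μ₂(f) equals the number of descents des(ω), i.e., the number of occurrences of the substring ba in ω. -/
open scoped Classical

section S1
variable {f : ℕ → ℕ}

lemma rset_sub {q : ℕ} (hq : q ∈ Rset f) : 1 ≤ q ∧ f q ≠ 0 := by
  obtain ⟨i, j, ⟨h1, hij, hall, _, _⟩, hiq, hqj, _⟩ := hq
  exact ⟨le_trans h1 hiq, hall q hiq hqj⟩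

lemma rset_sub_supp : Rset f ⊆ Function.support f := fun q hq => (rset_sub hq).2

lemma spread_unique_right {i j i' j' q : ℕ} (h : IsSpread f i j) (h' : IsSpread f i' j')
    (h1 : i ≤ q) (h2 : q ≤ j) (h3 : i' ≤ q) (h4 : q ≤ j') : j = j' := by
  by_contra hne
  rcases Nat.lt_or_ge j j' with hlt | hge
  · exact h'.2.2.1 (j + 1) (by omega) (by omega) h.2.2.2.2
  · exact h.2.2.1 (j' + 1) (by omega) (by omega) h'.2.2.2.2

lemma spread_exists (hf : (Function.support f).Finite) {q : ℕ} (h1 : 1 ≤ q) (h2 : f q ≠ 0) :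
    ∃ i j, IsSpread f i j ∧ i ≤ q ∧ q ≤ j := by
  obtain ⟨N, hN⟩ := hf.bddAbove
  have hNf : ∀ n, N < n → f n = 0 := by
    intro n hn
    by_contra h
    exact absurd (hN (by simpa [Function.support] using h)) (by omega)
  have hd : ∃ d, f (q + d + 1) = 0 := ⟨N, hNf _ (by omega)⟩
  have hc : ∃ c, q - c = 1 ∨ f (q - c - 1) = 0 := ⟨q - 1, Or.inl (by omega)⟩
  set d := Nat.find hd with hdd
  set c := Nat.find hc with hcc
  have hcle : c ≤ q - 1 := Nat.find_le (Or.inl (by omega))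
  refine ⟨q - c, q + d, ⟨by omega, by omega, ?_, ?_, Nat.find_spec hd⟩, by omega, by omega⟩
  · intro k hk1 hk2
    rcases Nat.lt_or_ge k q with hk | hk
    · have hc'' : q - k - 1 < c := by omega
      have := Nat.find_min hc hc''
      push_neg at this
      have h3 : f (q - (q - k - 1) - 1) ≠ 0 := this.2
      have hke : q - (q - k - 1) - 1 = k := by omega
      rwa [hke] at h3
    · rcases Nat.eq_or_lt_of_le hk with rfl | hk'
      · exact h2
      · have he : k - q - 1 < d := by omega
        have := Nat.find_min hd he
        have hke : q + (k - q - 1) + 1 = k := by omega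
        rwa [hke] at this
  · exact Nat.find_spec hc

/-- The key recursion for membership in `R(f)`. -/
lemma mem_Rset_iff (hf : (Function.support f).Finite) (q : ℕ) :
    q ∈ Rset f ↔ 1 ≤ q ∧ f q ≠ 0 ∧ q + 1 ∉ Rset f := by
  constructor
  · intro hq
    obtain ⟨i, j, hs, hiq, hqj, hpar⟩ := hq
    refine ⟨le_trans hs.1 hiq, hs.2.2.1 q hiq hqj, ?_⟩
    rintro ⟨i', j', hs', hiq', hqj', hpar'⟩
    rcases Nat.eq_or_lt_of_le hqj with rfl | hlt
    · exact hs'.2.2.1 (q + 1) hiq' hqj' hs.2.2.2.2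
    · have hjj : j = j' := spread_unique_right hs hs' (by omega) (by omega) hiq' hqj'
      omega
  · rintro ⟨h1, h2, h3⟩
    obtain ⟨i, j, hs, hiq, hqj⟩ := spread_exists hf h1 h2
    refine ⟨i, j, hs, hiq, hqj, ?_⟩
    by_contra hpar
    exact h3 ⟨i, j, hs, by omega, by omega, by omega⟩

lemma not_mem_Rset_of_zero {q : ℕ} (h : f q = 0) : q ∉ Rset f :=
  fun hq => (rset_sub hq).2 h

lemma rset_finite (hf : (Function.support f).Finite) : (Rset f).Finite :=
  hf.subset rset_sub_supp

/-- maximal support element is in R -/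
lemma rset_nonempty (hf : IsFreq f) (hne : ∃ q, f q ≠ 0) : ∃ q, q ∈ Rset f := by
  obtain ⟨N, hN⟩ := hf.2.bddAbove
  have hNf : ∀ n, N < n → f n = 0 := by
    intro n hn; by_contra h
    exact absurd (hN (by simpa [Function.support] using h)) (by omega)
  -- take maximal q with f q ≠ 0
  obtain ⟨q0, hq0⟩ := hne
  have hex : ∃ m, f (N - m) ≠ 0 := by
    refine ⟨N - q0, ?_⟩
    have : q0 ≤ N := by
      by_contra h; exact hq0 (hNf _ (by omega))
    simpa [Nat.sub_sub_self this] using hq0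
  set m := Nat.find hex with hm
  set q := N - m with hqdef
  have hfq : f q ≠ 0 := Nat.find_spec hex
  have h1q : 1 ≤ q := by
    rcases Nat.eq_zero_or_pos q with h | h
    · rw [h] at hfq; exact absurd hf.1 hfq
    · exact h
  have hmN : m ≤ N := by
    by_contra h
    have : q = 0 := by omega
    rw [this] at hfq; exact hfq hf.1
  have hnext : f (q + 1) = 0 := by
    rcases Nat.eq_zero_or_pos m with h | h
    · exact hNf _ (by omega)
    · have := Nat.find_min hex (show m - 1 < m by omega)
      push_neg at this
      have he : N - (m - 1) = q + 1 := by omega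
      rwa [he] at this
  refine ⟨q, (mem_Rset_iff hf.2 q).2 ⟨h1q, hfq, not_mem_Rset_of_zero hnext⟩⟩

lemma dB_zero : dB f 0 = 0 := rfl

lemma fq_pos_of_mem {q : ℕ} (h : q ∈ Rset f) : 1 ≤ f q := Nat.one_le_iff_ne_zero.2 (rset_sub h).2

lemma dB_apply {n : ℕ} (hn : n ≠ 0) :
    dB f n = f n - (if n ∈ Rset f then 1 else 0) + (if n + 1 ∈ Rset f then 1 else 0) := by
  simp [dB, hn]

lemma isFreq_dB (hf : IsFreq f) : IsFreq (dB f) := by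
  refine ⟨rfl, ?_⟩
  have : Function.support (dB f) ⊆ Function.support f ∪ (fun q => q - 1) '' Rset f := by
    intro n hn
    simp only [Function.mem_support] at hn
    rcases Nat.eq_zero_or_pos n with rfl | hpos
    · exact absurd rfl hn
    by_cases h1 : f n ≠ 0
    · exact Or.inl h1
    · push_neg at h1
      right
      have hnR : n ∉ Rset f := not_mem_Rset_of_zero h1
      have : n + 1 ∈ Rset f := by
        by_contra h2
        rw [dB_apply (by omega), if_neg hnR, if_neg h2, h1] at hn
        exact hn rfl
      exact ⟨n + 1, this, rfl⟩
  exact ((hf.2.union ((rset_finite hf.2).image _)).subset this)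

/-- Claim A -/
lemma claimA (hf : IsFreq f) {q : ℕ} (hq : 1 ≤ q)
    (h1 : q + 1 ∈ Rset f) (h2 : q + 1 ∉ Rset (dB f)) :
    q ∉ Rset f ∧ q ∈ Rset (dB f) := by
  have hg := (isFreq_dB hf).2
  have hr : q ∉ Rset f := by
    intro hr
    exact ((mem_Rset_iff hf.2 q).1 hr).2.2 h1
  refine ⟨hr, (mem_Rset_iff hg q).2 ⟨hq, ?_, h2⟩⟩
  rw [dB_apply (by omega), if_neg hr, if_pos h1]
  omega

/-- Claim B -/
lemma claimB (hf : IsFreq f) {q : ℕ} (hq : 1 ≤ q)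
    (h1 : q ∈ Rset (dB f)) (h2 : q ∉ Rset f) :
    q + 1 ∈ Rset f ∧ q + 1 ∉ Rset (dB f) := by
  have hg := (isFreq_dB hf).2
  obtain ⟨-, hgq, hs1⟩ := (mem_Rset_iff hg q).1 h1
  refine ⟨?_, hs1⟩
  by_contra h3
  have hfq : f q = 0 := by
    by_contra h4
    exact h2 ((mem_Rset_iff hf.2 q).2 ⟨hq, h4, h3⟩)
  rw [dB_apply (by omega), if_neg h2, if_neg h3, hfq] at hgq
  exact hgq rfl

end S1

section S2
variable {f : ℕ → ℕ}

lemma filter_card_step (S : Set ℕ) {q N : ℕ} (hqN : q ≤ N) :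
    ((Finset.Icc q N).filter (· ∈ S)).card
      = (if q ∈ S then 1 else 0) + ((Finset.Icc (q + 1) N).filter (· ∈ S)).card := by
  have hins : Finset.Icc q N = insert q (Finset.Icc (q + 1) N) := by
    ext x; simp only [Finset.mem_Icc, Finset.mem_insert]; omega
  rw [hins, Finset.filter_insert]
  split_ifs with h
  · rw [Finset.card_insert_of_notMem (by simp [Finset.mem_filter])]
    omega
  · exact (Nat.zero_add _).symm

lemma mu2_key (hf : IsFreq f) :
    (Rset f).ncard = (Rset (dB f)).ncard
      + (if 1 ∈ Rset f ∧ 1 ∉ Rset (dB f) then 1 else 0) := by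
  have hg := isFreq_dB hf
  have hRf := rset_finite hf.2
  have hRg := rset_finite hg.2
  obtain ⟨N, hN⟩ := (hRf.union hRg).bddAbove
  have hNf : ∀ x, x ∈ Rset f → x ≤ N := fun x hx => hN (Or.inl hx)
  have hNg : ∀ x, x ∈ Rset (dB f) → x ≤ N := fun x hx => hN (Or.inr hx)
  have main : ∀ d q, N + 1 ≤ q + d → 1 ≤ q →
      ((Finset.Icc q N).filter (· ∈ Rset f)).card
        = ((Finset.Icc q N).filter (· ∈ Rset (dB f))).card
          + (if q ∈ Rset f ∧ q ∉ Rset (dB f) then 1 else 0) := by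
    intro d
    induction d with
    | zero =>
      intro q hq h1
      have hic : Finset.Icc q N = ∅ := Finset.Icc_eq_empty (by omega)
      have hqf : q ∉ Rset f := fun h => absurd (hNf q h) (by omega)
      simp [hic, hqf]
    | succ d ih =>
      intro q hq h1
      rcases Nat.lt_or_ge N q with h | h
      · have hic : Finset.Icc q N = ∅ := Finset.Icc_eq_empty (by omega)
        have hqf : q ∉ Rset f := fun hh => absurd (hNf q hh) (by omega)
        simp [hic, hqf]
      · have key := ih (q + 1) (by omega) (by omega)
        rw [filter_card_step _ h, filter_card_step _ h, key]
        by_cases hr : q ∈ Rset f <;> by_cases hs : q ∈ Rset (dB f) <;>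
          by_cases h' : q + 1 ∈ Rset f ∧ q + 1 ∉ Rset (dB f)
        · exact absurd hr (claimA hf h1 h'.1 h'.2).1
        · split_ifs <;> first | tauto | omega
        · exact absurd hr (claimA hf h1 h'.1 h'.2).1
        · split_ifs <;> first | tauto | omega
        · split_ifs <;> first | tauto | omega
        · exact absurd (claimB hf h1 hs hr) h'
        · exact absurd (claimA hf h1 h'.1 h'.2).2 hs
        · split_ifs <;> first | tauto | omega
  have e1 : Rset f = ↑((Finset.Icc 1 N).filter (· ∈ Rset f)) := by
    ext x
    simp only [Finset.coe_filter, Finset.mem_Icc, Set.mem_setOf_eq]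
    exact ⟨fun hx => ⟨⟨(rset_sub hx).1, hNf x hx⟩, hx⟩, fun hx => hx.2⟩
  have e2 : Rset (dB f) = ↑((Finset.Icc 1 N).filter (· ∈ Rset (dB f))) := by
    ext x
    simp only [Finset.coe_filter, Finset.mem_Icc, Set.mem_setOf_eq]
    exact ⟨fun hx => ⟨⟨(rset_sub hx).1, hNg x hx⟩, hx⟩, fun hx => hx.2⟩
  have c1 := congrArg Set.ncard e1
  have c2 := congrArg Set.ncard e2
  rw [Set.ncard_coe_finset] at c1 c2
  rw [c1, c2]
  exact main N 1 (by omega) le_rfl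

end S2

section S3
variable {f : ℕ → ℕ}

lemma sum_dB_weight (hf : IsFreq f) (w : ℕ → ℕ) {N : ℕ} (hN : ∀ x ∈ Rset f, x ≤ N) :
    ∑ n ∈ Finset.Icc 1 N, w n * dB f n + ∑ m ∈ (rset_finite hf.2).toFinset, w m
      = ∑ n ∈ Finset.Icc 1 N, w n * f n
        + ∑ m ∈ ((rset_finite hf.2).toFinset.erase 1), w (m - 1) := by
  classical
  set RF := (rset_finite hf.2).toFinset with hRF
  have hmem : ∀ m, m ∈ RF ↔ m ∈ Rset f := by intro m; simp [hRF]
  have hterm : ∀ n ∈ Finset.Icc 1 N,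
      w n * dB f n + w n * (if n ∈ Rset f then 1 else 0)
        = w n * f n + w n * (if n + 1 ∈ Rset f then 1 else 0) := by
    intro n hn
    rw [Finset.mem_Icc] at hn
    have key : dB f n + (if n ∈ Rset f then 1 else 0)
        = f n + (if n + 1 ∈ Rset f then 1 else 0) := by
      rw [dB_apply (show n ≠ 0 by omega)]
      by_cases h1 : n ∈ Rset f
      · rw [if_pos h1]
        have := fq_pos_of_mem h1
        split_ifs <;> omega
      · rw [if_neg h1]
        split_ifs <;> omega
    rw [← Nat.mul_add, ← Nat.mul_add, key]
  have hsum := Finset.sum_congr rfl hterm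
  rw [Finset.sum_add_distrib, Finset.sum_add_distrib] at hsum
  have e1 : ∑ n ∈ Finset.Icc 1 N, w n * (if n ∈ Rset f then 1 else 0)
      = ∑ m ∈ RF, w m := by
    have : ∀ n ∈ Finset.Icc 1 N,
        w n * (if n ∈ Rset f then 1 else 0) = if n ∈ Rset f then w n else 0 := by
      intro n _; split_ifs <;> omega
    rw [Finset.sum_congr rfl this, ← Finset.sum_filter]
    apply Finset.sum_congr _ (fun _ _ => rfl)
    ext x
    simp only [Finset.mem_filter, Finset.mem_Icc, hmem]
    exact ⟨fun h => h.2, fun h => ⟨⟨(rset_sub h).1, hN x h⟩, h⟩⟩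
  have e2 : ∑ n ∈ Finset.Icc 1 N, w n * (if n + 1 ∈ Rset f then 1 else 0)
      = ∑ m ∈ RF.erase 1, w (m - 1) := by
    have : ∀ n ∈ Finset.Icc 1 N,
        w n * (if n + 1 ∈ Rset f then 1 else 0) = if n + 1 ∈ Rset f then w n else 0 := by
      intro n _; split_ifs <;> omega
    rw [Finset.sum_congr rfl this, ← Finset.sum_filter]
    refine Finset.sum_nbij' (fun n => n + 1) (fun m => m - 1) ?_ ?_ ?_ ?_ ?_
    · intro a ha
      simp only [Finset.mem_filter, Finset.mem_Icc] at ha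
      refine Finset.mem_erase.2 ⟨?_, (hmem _).2 ha.2⟩
      show a + 1 ≠ 1
      omega
    · intro b hb
      rw [Finset.mem_erase, hmem] at hb
      have hb1 := (rset_sub hb.2).1
      have hbN := hN b hb.2
      simp only [Finset.mem_filter, Finset.mem_Icc]
      refine ⟨⟨by omega, by omega⟩, ?_⟩
      have he : b - 1 + 1 = b := by omega
      rw [he]
      exact hb.2
    · intro a _; show a + 1 - 1 = a; omega
    · intro b hb
      rw [Finset.mem_erase, hmem] at hb
      have := (rset_sub hb.2).1
      show b - 1 + 1 = b
      omega
    · intro a _; simp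
  rw [e1, e2] at hsum
  exact hsum

lemma flen_eq_sum (hf : IsFreq f) {N : ℕ} (hs : ∀ n, N < n → f n = 0) :
    flen f = ∑ n ∈ Finset.Icc 1 N, f n := by
  apply finsum_eq_sum_of_support_subset
  intro x hx
  simp only [Function.mem_support] at hx
  simp only [Finset.coe_Icc, Set.mem_Icc]
  constructor
  · rcases Nat.eq_zero_or_pos x with rfl | h
    · exact absurd hf.1 hx
    · exact h
  · by_contra h; exact hx (hs x (by omega))

lemma fsize_eq_sum (hf : IsFreq f) {N : ℕ} (hs : ∀ n, N < n → f n = 0) :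
    fsize f = ∑ n ∈ Finset.Icc 1 N, n * f n := by
  apply finsum_eq_sum_of_support_subset
  intro x hx
  simp only [Function.mem_support] at hx
  simp only [Finset.coe_Icc, Set.mem_Icc]
  have hxf : f x ≠ 0 := by intro h; rw [h, Nat.mul_zero] at hx; exact hx rfl
  constructor
  · rcases Nat.eq_zero_or_pos x with rfl | h
    · exact absurd hf.1 hxf
    · exact h
  · by_contra h; exact hxf (hs x (by omega))

lemma bounds_exist (hf : IsFreq f) :
    ∃ N, (∀ x ∈ Rset f, x ≤ N) ∧ (∀ n, N < n → f n = 0) ∧ (∀ n, N < n → dB f n = 0) := by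
  have hg := isFreq_dB hf
  obtain ⟨N, hN⟩ := (hf.2.union hg.2).bddAbove
  refine ⟨N, fun x hx => hN (Or.inl (rset_sub_supp hx)), ?_, ?_⟩
  · intro n hn; by_contra h
    exact absurd (hN (Or.inl (by simpa [Function.support] using h))) (by omega)
  · intro n hn; by_contra h
    exact absurd (hN (Or.inr (by simpa [Function.support] using h))) (by omega)

lemma mu2_eq_card (hf : IsFreq f) : mu2 f = (rset_finite hf.2).toFinset.card := by
  rw [mu2, Set.ncard_eq_toFinset_card _ (rset_finite hf.2)]

lemma flen_dB (hf : IsFreq f) :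
    flen f = flen (dB f) + (if 1 ∈ Rset f then 1 else 0) := by
  obtain ⟨N, hN, hfN, hgN⟩ := bounds_exist hf
  have h := sum_dB_weight hf (fun _ => 1) hN
  simp only [Nat.one_mul] at h
  rw [flen_eq_sum hf hfN, flen_eq_sum (isFreq_dB hf) hgN]
  set RF := (rset_finite hf.2).toFinset with hRF
  have hc1 : ∑ m ∈ RF, (1 : ℕ) = RF.card := by simp
  have hc2 : ∑ m ∈ RF.erase 1, (1 : ℕ) = (RF.erase 1).card := by simp
  rw [hc1, hc2] at h
  have hmem1 : 1 ∈ RF ↔ 1 ∈ Rset f := by simp [hRF]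
  by_cases h1 : 1 ∈ Rset f
  · rw [if_pos h1]
    have h1' : 1 ∈ RF := hmem1.2 h1
    have := Finset.card_erase_of_mem h1'
    have hpos : 1 ≤ RF.card := Finset.card_pos.2 ⟨1, h1'⟩
    omega
  · rw [if_neg h1]
    rw [Finset.erase_eq_of_notMem (fun hx => h1 (hmem1.1 hx))] at h
    omega

lemma fsize_dB (hf : IsFreq f) : fsize f = fsize (dB f) + mu2 f := by
  obtain ⟨N, hN, hfN, hgN⟩ := bounds_exist hf
  have h0 := sum_dB_weight hf (fun n => n) hN
  rw [fsize_eq_sum hf hfN, fsize_eq_sum (isFreq_dB hf) hgN, mu2_eq_card hf]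
  set RF := (rset_finite hf.2).toFinset with hRF
  have h : ∑ n ∈ Finset.Icc 1 N, n * dB f n + ∑ m ∈ RF, m
      = ∑ n ∈ Finset.Icc 1 N, n * f n + ∑ m ∈ RF.erase 1, (m - 1) := by
    simpa using h0
  have hmem : ∀ m, m ∈ RF ↔ m ∈ Rset f := by intro m; simp [hRF]
  have hsub : ∑ m ∈ RF.erase 1, (m - 1) + (RF.erase 1).card = ∑ m ∈ RF.erase 1, m := by
    rw [Finset.card_eq_sum_ones, ← Finset.sum_add_distrib]
    apply Finset.sum_congr rfl
    intro m hm
    have h2 := (rset_sub ((hmem m).1 (Finset.mem_of_mem_erase hm))).1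
    omega
  have hmem1 : 1 ∈ RF ↔ 1 ∈ Rset f := hmem 1
  by_cases h1 : 1 ∈ RF
  · have herase : ∑ m ∈ RF.erase 1, m + 1 = ∑ m ∈ RF, m := by
      have := Finset.sum_erase_add RF (fun m => m) h1
      simpa using this
    have hce := Finset.card_erase_of_mem h1
    have hpos : 1 ≤ RF.card := Finset.card_pos.2 ⟨1, h1⟩
    omega
  · have herase : ∑ m ∈ RF.erase 1, m = ∑ m ∈ RF, m := by
      rw [Finset.erase_eq_of_notMem h1]
    have hce : (RF.erase 1).card = RF.card := by rw [Finset.erase_eq_of_notMem h1]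
    omega

end S3

section S4
variable {f : ℕ → ℕ}

lemma Rset_zeroF : Rset zeroF = ∅ :=
  Set.eq_empty_iff_forall_notMem.2 fun q hq => (rset_sub hq).2 rfl

lemma isFreq_zeroF : IsFreq zeroF := ⟨rfl, by simp [zeroF, Function.support]⟩

lemma dB_zeroF : dB zeroF = zeroF := by
  funext n
  simp [dB, zeroF, Rset_zeroF]

lemma fsize_zeroF : fsize zeroF = 0 := by simp [fsize, zeroF]

lemma flen_zeroF : flen zeroF = 0 := by simp [flen, zeroF]

lemma mu2_zeroF : mu2 zeroF = 0 := by simp [mu2, Rset_zeroF]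

lemma fsize_eq_zero (hf : IsFreq f) (h : fsize f = 0) : f = zeroF := by
  obtain ⟨N, _, hfN, _⟩ := bounds_exist hf
  rw [fsize_eq_sum hf hfN] at h
  funext n
  show f n = 0
  rcases Nat.eq_zero_or_pos n with rfl | hn
  · exact hf.1
  rcases Nat.lt_or_ge N n with h2 | h2
  · exact hfN n h2
  · have h3 := Finset.sum_eq_zero_iff.1 h n (Finset.mem_Icc.2 ⟨hn, h2⟩)
    rcases Nat.mul_eq_zero.1 h3 with h4 | h4 <;> omega

lemma mu2_pos (hf : IsFreq f) (hne : f ≠ zeroF) : 0 < mu2 f := by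
  have hq : ∃ q, f q ≠ 0 := by
    by_contra h
    push_neg at h
    exact hne (funext fun n => h n)
  obtain ⟨q, hq⟩ := rset_nonempty hf hq
  rw [mu2]
  exact (Set.ncard_pos (rset_finite hf.2)).2 ⟨q, hq⟩

lemma fsize_lt (hf : IsFreq f) (hne : f ≠ zeroF) : fsize (dB f) < fsize f := by
  have := fsize_dB hf
  have := mu2_pos hf hne
  omega

lemma exists_iter (hf : IsFreq f) : ∃ m, dB^[m] f = zeroF := by
  suffices H : ∀ n g, IsFreq g → fsize g ≤ n → ∃ m, dB^[m] g = zeroF from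
    H (fsize f) f hf le_rfl
  intro n
  induction n with
  | zero =>
    intro g hg h0
    refine ⟨0, ?_⟩
    show g = zeroF
    exact fsize_eq_zero hg (by omega)
  | succ n ih =>
    intro g hg h0
    by_cases h : g = zeroF
    · exact ⟨0, h⟩
    · obtain ⟨m, hm⟩ := ih (dB g) (isFreq_dB hg) (by have := fsize_lt hg h; omega)
      exact ⟨m + 1, by rw [Function.iterate_succ_apply]; exact hm⟩

lemma chainK_zeroF : chainK zeroF = 0 := by
  have h : ∃ m, dB^[m] zeroF = zeroF := ⟨0, rfl⟩
  rw [chainK, dif_pos h]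
  exact (Nat.find_eq_zero h).2 rfl

lemma chainK_succ (hf : IsFreq f) (hne : f ≠ zeroF) : chainK f = chainK (dB f) + 1 := by
  have hex : ∃ m, dB^[m] f = zeroF := exists_iter hf
  have hex' : ∃ m, dB^[m] (dB f) = zeroF := exists_iter (isFreq_dB hf)
  rw [chainK, chainK, dif_pos hex, dif_pos hex']
  apply le_antisymm
  · apply Nat.find_le
    show dB^[Nat.find hex' + 1] f = zeroF
    rw [Function.iterate_succ_apply]
    exact Nat.find_spec hex'
  · rw [Nat.add_one_le_iff]
    rw [Nat.lt_find_iff]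
    intro m hm hmz
    rcases m with _ | k
    · exact hne hmz
    · rw [Function.iterate_succ_apply] at hmz
      exact Nat.find_min hex' (by omega) hmz

lemma burgeCode_cons (hf : IsFreq f) (hne : f ≠ zeroF) :
    burgeCode f = (if 1 ∈ Rset f then true else false) :: burgeCode (dB f) := by
  have htail : (List.range (chainK (dB f) + 1)).map
      ((fun i => if 1 ∈ Rset (dB^[i] f) then true else false) ∘ Nat.succ)
      = burgeCode (dB f) := by
    rw [burgeCode]
    apply List.map_congr_left
    intro a _
    simp [Function.comp, Function.iterate_succ_apply]
    rfl
  rw [burgeCode, chainK_succ hf hne, List.range_succ_eq_map, List.map_cons, List.map_map, htail]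
  simp
  rfl

lemma burgeCode_head (g : ℕ → ℕ) :
    (burgeCode g)[0]? = some (if 1 ∈ Rset g then true else false) := by
  rw [burgeCode, List.getElem?_map, List.getElem?_range (by omega : 0 < chainK g + 1)]
  simp
  rfl

lemma burgeCode_zeroF : burgeCode zeroF = [false] := by
  rw [burgeCode, chainK_zeroF]
  simp [List.range_succ, Rset_zeroF]

lemma descSet_finite (w : List Bool) : (descSet w).Finite := by
  apply (Set.finite_Icc 1 w.length).subset
  rintro i ⟨h1, _, h3⟩
  obtain ⟨h, -⟩ := List.getElem?_eq_some_iff.1 h3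
  exact ⟨h1, by omega⟩

lemma descSet_ge_one {w : List Bool} {i : ℕ} (h : i ∈ descSet w) : 1 ≤ i := h.1

lemma descSet_nil_or : descSet [false] = ∅ := by
  ext i
  simp only [Set.mem_empty_iff_false, iff_false]
  rintro ⟨h1, h2, h3⟩
  rcases i with _ | _ | i
  · omega
  · simp [descSet] at h2
  · simp at h3

lemma mem_descSet_cons {x : Bool} {w : List Bool} {i : ℕ} :
    i ∈ descSet (x :: w) ↔
      (i = 1 ∧ x = true ∧ w[0]? = some false) ∨ (2 ≤ i ∧ (i - 1) ∈ descSet w) := by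
  rcases i with _ | _ | i
  · simp [descSet]
  · simp [descSet]
  · simp only [descSet, Set.mem_setOf_eq]
    have e1 : i + 1 + 1 - 1 = i + 1 := by omega
    have e2 : i + 1 - 1 = i := by omega
    rw [e1]
    simp only [List.getElem?_cons_succ, e2]
    constructor
    · rintro ⟨-, h2, h3⟩
      exact Or.inr ⟨by omega, by omega, h2, h3⟩
    · rintro (⟨h, -⟩ | ⟨-, -, h2, h3⟩)
      · omega
      · exact ⟨by omega, h2, h3⟩

lemma descSet_cons (x : Bool) (w : List Bool) :
    descSet (x :: w)
      = (fun i => i + 1) '' descSet w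
        ∪ (if x = true ∧ w[0]? = some false then {1} else ∅) := by
  ext i
  rw [mem_descSet_cons]
  simp only [Set.mem_union, Set.mem_image]
  constructor
  · rintro (⟨rfl, hx, hw⟩ | ⟨h2, hd⟩)
    · right; rw [if_pos ⟨hx, hw⟩]; rfl
    · exact Or.inl ⟨i - 1, hd, by omega⟩
  · rintro (⟨j, hj, rfl⟩ | h)
    · have hj1 := descSet_ge_one hj
      right
      refine ⟨?_, ?_⟩
      · show 2 ≤ j + 1
        omega
      · show j + 1 - 1 ∈ descSet w
        simpa using hj
    · split_ifs at h with hc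
      · left
        rcases h with rfl
        exact ⟨rfl, hc.1, hc.2⟩
      · exact absurd h (Set.notMem_empty i)

lemma finsum_mem_ones {s : Set ℕ} (hs : s.Finite) : ∑ᶠ i ∈ s, (1 : ℕ) = s.ncard := by
  have h1 : s = ↑hs.toFinset := by simp
  rw [h1, finsum_mem_coe_finset]
  simp [Set.ncard_eq_toFinset_card _ hs]

lemma descSet_disj (x : Bool) (w : List Bool) :
    Disjoint ((fun i => i + 1) '' descSet w)
      (if x = true ∧ w[0]? = some false then ({1} : Set ℕ) else ∅) := by
  rw [Set.disjoint_left]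
  rintro i ⟨j, hj, rfl⟩ hmem
  have := descSet_ge_one hj
  split_ifs at hmem
  · rw [Set.mem_singleton_iff] at hmem
    have hj2 : j + 1 = 1 := by simpa using hmem
    omega
  · exact hmem

lemma ite_set_finite (x : Bool) (w : List Bool) :
    (if x = true ∧ w[0]? = some false then ({1} : Set ℕ) else ∅).Finite := by
  split_ifs
  · exact Set.finite_singleton 1
  · exact Set.finite_empty

lemma descSet_sum_cons (x : Bool) (w : List Bool) :
    ∑ᶠ i ∈ descSet (x :: w), i
      = (∑ᶠ i ∈ descSet w, i) + (descSet w).ncard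
        + (if x = true ∧ w[0]? = some false then 1 else 0) := by
  rw [descSet_cons, finsum_mem_union (descSet_disj x w)
    ((descSet_finite w).image _) (ite_set_finite x w)]
  have h1 : ∑ᶠ i ∈ (fun i => i + 1) '' descSet w, i
      = (∑ᶠ i ∈ descSet w, i) + (descSet w).ncard := by
    rw [finsum_mem_image (fun a _ b _ h => by simpa using h)]
    rw [finsum_mem_add_distrib (descSet_finite w), finsum_mem_ones (descSet_finite w)]
  have h2 : ∑ᶠ i ∈ (if x = true ∧ w[0]? = some false then ({1} : Set ℕ) else ∅), i
      = (if x = true ∧ w[0]? = some false then 1 else 0) := by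
    split_ifs
    · exact finsum_mem_singleton
    · exact finsum_mem_empty
  rw [h1, h2]

lemma descSet_card_cons (x : Bool) (w : List Bool) :
    (descSet (x :: w)).ncard
      = (descSet w).ncard + (if x = true ∧ w[0]? = some false then 1 else 0) := by
  rw [descSet_cons, Set.ncard_union_eq (descSet_disj x w)
    ((descSet_finite w).image _) (ite_set_finite x w)]
  rw [Set.ncard_image_of_injective _ (add_left_injective 1)]
  congr 1
  split_ifs
  · simp
  · simp

lemma main_aux : ∀ n (f : ℕ → ℕ), IsFreq f → fsize f ≤ n →
    flen f = (burgeCode f).count true ∧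
    fsize f = ∑ᶠ i ∈ descSet (burgeCode f), i ∧
    mu2 f = (descSet (burgeCode f)).ncard := by
  intro n
  induction n with
  | zero =>
    intro f hf h0
    have hz : f = zeroF := fsize_eq_zero hf (by omega)
    subst hz
    rw [burgeCode_zeroF, flen_zeroF, fsize_zeroF, mu2_zeroF, descSet_nil_or]
    refine ⟨by simp, by simp, by simp⟩
  | succ n ih =>
    intro f hf h0
    by_cases hne : f = zeroF
    · subst hne
      rw [burgeCode_zeroF, flen_zeroF, fsize_zeroF, mu2_zeroF, descSet_nil_or]
      refine ⟨by simp, by simp, by simp⟩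
    · have hg := isFreq_dB hf
      obtain ⟨ih1, ih2, ih3⟩ := ih (dB f) hg (by have := fsize_lt hf hne; omega)
      have hcode := burgeCode_cons hf hne
      have hhead := burgeCode_head (dB f)
      have hc : (if (if 1 ∈ Rset f then true else false) = true
            ∧ (burgeCode (dB f))[0]? = some false then 1 else 0)
          = (if 1 ∈ Rset f ∧ 1 ∉ Rset (dB f) then 1 else 0) := by
        rw [hhead]
        by_cases h1 : 1 ∈ Rset f <;> by_cases h2 : 1 ∈ Rset (dB f) <;>
          simp [h1, h2]
      refine ⟨?_, ?_, ?_⟩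
      · rw [flen_dB hf, hcode, List.count_cons, ih1]
        by_cases h1 : 1 ∈ Rset f <;> simp [h1]
      · rw [fsize_dB hf, hcode, descSet_sum_cons, hc, ← ih2, ← ih3]
        have hk : mu2 f = mu2 (dB f) + (if 1 ∈ Rset f ∧ 1 ∉ Rset (dB f) then 1 else 0) :=
          mu2_key hf
        omega
      · rw [hcode, descSet_card_cons, hc, ← ih3]
        exact mu2_key hf
end S4


/-- with `ω = Ω(f)`: `ℓ(f)` is the number of `b`'s in `ω`;
`|f| = maj(ω)`; and `μ₂(f) = des(ω)`, the number of occurrences of `ba`. -/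
theorem stmt10 (f : ℕ → ℕ) (hf : IsFreq f) :
    flen f = (burgeCode f).count true ∧
    fsize f = ∑ᶠ i ∈ descSet (burgeCode f), i ∧
    mu2 f = (descSet (burgeCode f)).ncard :=
  main_aux (fsize f) f hf le_rfl
end
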